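/- arXiv:2601.00403 — 11 statements merged into one kernel-verified Lean document; each statement's English description precedes it below -/
import Mathlib

section
/- Let H be a complex Hilbert space, let G ⊆ H be nonempty, and let Θ ⊆ 𝕋 have exactly two elements. Then G does Θ-PR in H if and only if G has the complement property, i.e., for every subset S ⊆ G, either S is complete in H or G \ S is complete in H. -/
open MeasureTheory Set

noncomputable section

/-- The unit circle in the complex plane. -/
def unitCircle : Set ℂ := {z : ℂ | ‖z‖ = 1}

/-- `G` does `Θ`-PR in `H`.  The paper inner product `⟨f,g⟩` (linear in the first argument)
corresponds to Mathlib's `inner g f` (which is linear in the second argument). -/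
def DoesPR {H : Type*} [NormedAddCommGroup H] [InnerProductSpace ℂ H]
    (G : Set H) (Θ : Set ℂ) : Prop :=
  ∀ f h : H, (∀ g ∈ G, ∃ θ ∈ Θ, (inner ℂ g f : ℂ) = θ * (inner ℂ g h : ℂ)) →
    ∃ θ ∈ Θ, f = θ • h

/-- A set `S` is complete in `H` if the closure of its linear span is all of `H`. -/
def IsCompleteSystem {H : Type*} [NormedAddCommGroup H] [InnerProductSpace ℂ H]
    (S : Set H) : Prop :=
  (Submodule.span ℂ S).topologicalClosure = ⊤

lemma mem_ortho_span {H : Type*} [NormedAddCommGroup H] [InnerProductSpace ℂ H]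
    (S : Set H) (u : H) (hu : ∀ g ∈ S, (inner ℂ g u : ℂ) = 0) :
    u ∈ (Submodule.span ℂ S)ᗮ := by
  rw [Submodule.mem_orthogonal]
  intro x hx
  induction hx using Submodule.span_induction with
  | mem g hg => exact hu g hg
  | zero => simp
  | add a b _ _ ha hb => rw [inner_add_left, ha, hb, add_zero]
  | smul c a _ ha => rw [inner_smul_left, ha, mul_zero]

lemma complete_ortho_zero {H : Type*} [NormedAddCommGroup H] [InnerProductSpace ℂ H]
    [CompleteSpace H] (S : Set H) (hS : IsCompleteSystem S) (u : H)
    (hu : ∀ g ∈ S, (inner ℂ g u : ℂ) = 0) : u = 0 := by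
  have h1 : u ∈ (Submodule.span ℂ S)ᗮ := mem_ortho_span S u hu
  have h2 : (Submodule.span ℂ S)ᗮ = ⊥ :=
    Submodule.topologicalClosure_eq_top_iff.mp hS
  rw [h2] at h1
  simpa using h1

lemma not_complete_exists {H : Type*} [NormedAddCommGroup H] [InnerProductSpace ℂ H]
    [CompleteSpace H] (S : Set H) (hS : ¬ IsCompleteSystem S) :
    ∃ u : H, u ≠ 0 ∧ ∀ g ∈ S, (inner ℂ g u : ℂ) = 0 := by
  have h2 : (Submodule.span ℂ S)ᗮ ≠ ⊥ := by
    intro h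
    exact hS (Submodule.topologicalClosure_eq_top_iff.mpr h)
  obtain ⟨u, hu, hne⟩ := Submodule.exists_mem_ne_zero_of_ne_bot h2
  exact ⟨u, hne, fun g hg => (Submodule.mem_orthogonal _ u).mp hu g (Submodule.subset_span hg)⟩

theorem stmt0 {H : Type*} [NormedAddCommGroup H] [InnerProductSpace ℂ H] [CompleteSpace H]
    (G : Set H) (hG : G.Nonempty)
    (Θ : Set ℂ) (hΘ : Θ ⊆ unitCircle) (hcard : ∃ θ₁ θ₂ : ℂ, θ₁ ≠ θ₂ ∧ Θ = {θ₁, θ₂}) :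
    DoesPR G Θ ↔ ∀ S ⊆ G, IsCompleteSystem S ∨ IsCompleteSystem (G \ S) := by
  obtain ⟨θ₁, θ₂, hne, rfl⟩ := hcard
  constructor
  · intro hPR S hSG
    by_contra hcon
    push_neg at hcon
    obtain ⟨hS, hGS⟩ := hcon
    obtain ⟨u, hu0, hu⟩ := not_complete_exists S hS
    obtain ⟨v, hv0, hv⟩ := not_complete_exists (G \ S) hGS
    set f : H := θ₁ • u + θ₂ • v with hf
    set h : H := u + v with hh
    have key : ∀ g ∈ G, ∃ θ ∈ ({θ₁, θ₂} : Set ℂ), (inner ℂ g f : ℂ) = θ * (inner ℂ g h : ℂ) := by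
      intro g hg
      by_cases hgS : g ∈ S
      · refine ⟨θ₂, by simp, ?_⟩
        simp [hf, hh, inner_add_right, inner_smul_right, hu g hgS, mul_add]
      · refine ⟨θ₁, by simp, ?_⟩
        simp [hf, hh, inner_add_right, inner_smul_right, hv g ⟨hg, hgS⟩, mul_add]
    obtain ⟨θ, hθ, heq⟩ := hPR f h key
    simp only [Set.mem_insert_iff, Set.mem_singleton_iff] at hθ
    rw [hf, hh] at heq
    rcases hθ with hθ1 | hθ2
    · apply hv0
      have hz : (θ₂ - θ₁) • v = 0 := by
        rw [hθ1] at heq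
        linear_combination (norm := module) heq
      exact (smul_eq_zero.mp hz).resolve_left (sub_ne_zero.mpr hne.symm)
    · apply hu0
      have hz : (θ₁ - θ₂) • u = 0 := by
        rw [hθ2] at heq
        linear_combination (norm := module) heq
      exact (smul_eq_zero.mp hz).resolve_left (sub_ne_zero.mpr hne)
  · intro hCP f h hfh
    set S : Set H := {g ∈ G | (inner ℂ g (f - θ₁ • h) : ℂ) = 0} with hSdef
    have hSG : S ⊆ G := fun g hg => hg.1
    rcases hCP S hSG with hc | hc
    · refine ⟨θ₁, by simp, ?_⟩
      have : f - θ₁ • h = 0 := complete_ortho_zero S hc _ (fun g hg => hg.2)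
      exact sub_eq_zero.mp this
    · refine ⟨θ₂, by simp, ?_⟩
      have : f - θ₂ • h = 0 := by
        apply complete_ortho_zero (G \ S) hc
        intro g hg
        obtain ⟨hgG, hgS⟩ := hg
        obtain ⟨θ, hθ, heq⟩ := hfh g hgG
        have hnot : (inner ℂ g (f - θ₁ • h) : ℂ) ≠ 0 := fun hz => hgS ⟨hgG, hz⟩
        rcases hθ with rfl | hθ2
        · exfalso
          apply hnot
          rw [inner_sub_right, inner_smul_right, heq, sub_self]
        · simp only [Set.mem_singleton_iff] at hθ2
          subst hθ2
          rw [inner_sub_right, inner_smul_right, heq, sub_self]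
      exact sub_eq_zero.mp this
end
end

section
/- Let H be a complex Hilbert space, let G ⊆ H be nonempty, and let Θ ⊆ 𝕋 be nonempty. Then the following are equivalent: (1) G does Θ-PR; (2) there exists a Möbius transform M ∈ Aut(𝕋) such that G does M(Θ)-PR; (3) for every Möbius transform M ∈ Aut(𝕋), G does M(Θ)-PR. -/
open MeasureTheory Set

noncomputable section

/-- `M` is (the restriction to the unit circle of) a Möbius transform mapping the unit
circle bijectively onto itself. -/
def IsMobiusAutOfCircle (M : ℂ → ℂ) : Prop :=
  (∃ a b c d : ℂ, a * d - b * c ≠ 0 ∧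
    ∀ z ∈ unitCircle, c * z + d ≠ 0 ∧ M z = (a * z + b) / (c * z + d)) ∧
  Set.BijOn M unitCircle unitCircle

lemma id_mobius : IsMobiusAutOfCircle (fun z => z) := by
  constructor
  · exact ⟨1, 0, 0, 1, by norm_num, fun z _ => by norm_num⟩
  · exact Set.bijOn_id _

/-- Main transfer lemma: PR is preserved under Möbius automorphisms of the circle. -/
lemma pr_mobius {H : Type*} [NormedAddCommGroup H] [InnerProductSpace ℂ H]
    (G : Set H) (Θ : Set ℂ) (hΘ : Θ ⊆ unitCircle) (M : ℂ → ℂ)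
    (hM : IsMobiusAutOfCircle M) (hPR : DoesPR G Θ) : DoesPR G (M '' Θ) := by
  obtain ⟨⟨a, b, c, d, hdet, hform⟩, hbij⟩ := hM
  intro f h hyp
  set f' : H := d • f - b • h with hf'
  set h' : H := a • h - c • f with hh'
  have key : ∀ g ∈ G, ∃ θ ∈ Θ, (inner ℂ g f' : ℂ) = θ * (inner ℂ g h' : ℂ) := by
    intro g hg
    obtain ⟨θ', hθ', heq⟩ := hyp g hg
    obtain ⟨θ, hθ, rfl⟩ := hθ'
    obtain ⟨hne, hMθ⟩ := hform θ (hΘ hθ)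
    refine ⟨θ, hθ, ?_⟩
    have e1 : (inner ℂ g f' : ℂ) = (d * M θ - b) * (inner ℂ g h : ℂ) := by
      rw [hf', inner_sub_right, inner_smul_right, inner_smul_right, heq]; ring
    have e2 : (inner ℂ g h' : ℂ) = (a - c * M θ) * (inner ℂ g h : ℂ) := by
      rw [hh', inner_sub_right, inner_smul_right, inner_smul_right, heq]; ring
    rw [e1, e2]
    have : d * M θ - b = θ * (a - c * M θ) := by
      have hx : M θ * (c * θ + d) = a * θ + b := by rw [hMθ]; exact div_mul_cancel₀ _ hne
      linear_combination hx
    rw [this]; ring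
  obtain ⟨θ₀, hθ₀, hfe⟩ := hPR f' h' key
  obtain ⟨hne₀, hMθ₀⟩ := hform θ₀ (hΘ hθ₀)
  refine ⟨M θ₀, Set.mem_image_of_mem _ hθ₀, ?_⟩
  have h1 : (c * θ₀ + d) • f = (a * θ₀ + b) • h := by
    have h2 : d • f - b • h = θ₀ • (a • h - c • f) := hfe
    linear_combination (norm := module) h2
  have h3 : f = ((a * θ₀ + b) / (c * θ₀ + d)) • h := by
    rw [div_eq_mul_inv, mul_comm, mul_smul]
    rw [← h1, smul_smul, inv_mul_cancel₀ hne₀, one_smul]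
  rw [h3, hMθ₀]

/-- Inverse of a Möbius automorphism of the circle. -/
lemma mobius_inverse (M : ℂ → ℂ) (hM : IsMobiusAutOfCircle M) :
    ∃ N : ℂ → ℂ, IsMobiusAutOfCircle N ∧ ∀ z ∈ unitCircle, N (M z) = z := by
  obtain ⟨⟨a, b, c, d, hdet, hform⟩, hbij⟩ := hM
  set N : ℂ → ℂ := fun z => (d * z + (-b)) / ((-c) * z + a) with hN
  have hden : ∀ w ∈ unitCircle, (-c) * M w + a ≠ 0 := by
    intro w hw
    obtain ⟨hne, hMw⟩ := hform w hw
    rw [hMw]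
    have : -c * ((a * w + b) / (c * w + d)) + a = (a * d - b * c) / (c * w + d) := by
      field_simp; ring
    rw [this]
    exact div_ne_zero hdet hne
  have hNM : ∀ w ∈ unitCircle, N (M w) = w := by
    intro w hw
    obtain ⟨hne, hMw⟩ := hform w hw
    rw [hN]
    simp only
    rw [hMw]
    rw [div_eq_iff]
    · have hx : (a * w + b) / (c * w + d) * (c * w + d) = a * w + b := div_mul_cancel₀ _ hne
      linear_combination hx
    · have := hden w hw
      rwa [hMw] at this
  refine ⟨N, ⟨⟨d, -b, -c, a, by rw [show d * a - -b * -c = a * d - b * c by ring]; exact hdet,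
      fun z hz => ?_⟩, ?_, ?_, ?_⟩, hNM⟩
  · obtain ⟨w, hw, rfl⟩ := hbij.surjOn hz
    exact ⟨hden w hw, rfl⟩
  · -- MapsTo
    intro z hz
    obtain ⟨w, hw, rfl⟩ := hbij.surjOn hz
    rw [hNM w hw]; exact hw
  · -- InjOn
    intro z₁ h₁ z₂ h₂ he
    obtain ⟨w₁, hw₁, rfl⟩ := hbij.surjOn h₁
    obtain ⟨w₂, hw₂, rfl⟩ := hbij.surjOn h₂
    rw [hNM w₁ hw₁, hNM w₂ hw₂] at he
    rw [he]
  · -- SurjOn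
    intro w hw
    exact ⟨M w, hbij.mapsTo hw, hNM w hw⟩

theorem stmt5 {H : Type*} [NormedAddCommGroup H] [InnerProductSpace ℂ H] [CompleteSpace H]
    (G : Set H) (hG : G.Nonempty) (Θ : Set ℂ) (hΘ : Θ ⊆ unitCircle) (hne : Θ.Nonempty) :
    (DoesPR G Θ ↔ ∃ M : ℂ → ℂ, IsMobiusAutOfCircle M ∧ DoesPR G (M '' Θ)) ∧
    (DoesPR G Θ ↔ ∀ M : ℂ → ℂ, IsMobiusAutOfCircle M → DoesPR G (M '' Θ)) := by
  have rev : ∀ M : ℂ → ℂ, IsMobiusAutOfCircle M → DoesPR G (M '' Θ) → DoesPR G Θ := by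
    intro M hM hPR'
    obtain ⟨N, hN, hNM⟩ := mobius_inverse M hM
    have hsub : M '' Θ ⊆ unitCircle := fun z ⟨w, hw, hz⟩ => hz ▸ hM.2.mapsTo (hΘ hw)
    have := pr_mobius G (M '' Θ) hsub N hN hPR'
    have himg : N '' (M '' Θ) = Θ := by
      rw [Set.image_image]
      rw [Set.image_congr (fun θ hθ => hNM θ (hΘ hθ))]
      exact Set.image_id Θ
    rwa [himg] at this
  constructor
  · constructor
    · intro hPR
      exact ⟨fun z => z, id_mobius, by rwa [Set.image_id']⟩
    · rintro ⟨M, hM, hPR'⟩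
      exact rev M hM hPR'
  · constructor
    · intro hPR M hM
      exact pr_mobius G Θ hΘ M hM hPR
    · intro hall
      have := hall (fun z => z) id_mobius
      rwa [Set.image_id'] at this
end
end

section
/- Let d ≥ 2 and let G = {g_1, …, g_m} ⊆ ℂ^d be a system of m vectors. (1) If m ≤ 2d − 2, then G fails Θ-PR in ℂ^d for every Θ ⊆ 𝕋 with at least 2 elements. (2) If m = 2d − 1, then G fails Θ-PR in ℂ^d for every Θ ⊆ 𝕋 with at least 3 elements. -/
open MeasureTheory Set

noncomputable section

namespace PRAux

open Module Submodule

variable {d : ℕ}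

local notation "E" => EuclideanSpace ℂ (Fin d)

lemma exists_ne_zero_orth (K : Submodule ℂ E) (h : finrank ℂ K < d) :
    ∃ u : E, u ≠ 0 ∧ u ∈ Kᗮ := by
  have hsum := K.finrank_add_finrank_orthogonal
  rw [finrank_euclideanSpace_fin] at hsum
  have hne : Kᗮ ≠ ⊥ := by
    intro hbot
    rw [hbot, finrank_bot] at hsum
    omega
  obtain ⟨b, hb, hb0⟩ := Submodule.exists_mem_ne_zero_of_ne_bot hne
  exact ⟨b, hb0, hb⟩

lemma finrank_span_le_ncard (s : Set E) (hs : s.Finite) :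
    finrank ℂ (span ℂ s) ≤ s.ncard := by
  haveI := hs.fintype
  calc finrank ℂ (span ℂ s) ≤ s.toFinset.card := finrank_span_le_card s
  _ = s.ncard := (Set.ncard_eq_toFinset_card' s).symm

lemma mem_orth_span (s : Set E) (v : E) (h : ∀ x ∈ s, (inner ℂ x v : ℂ) = 0) :
    v ∈ (span ℂ s)ᗮ := by
  rw [Submodule.mem_orthogonal]
  intro u hu
  induction hu using Submodule.span_induction with
  | mem x hx => exact h x hx
  | zero => exact inner_zero_left v
  | add x y _ _ hx hy => rw [inner_add_left, hx, hy, add_zero]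
  | smul a x _ hx => rw [inner_smul_left, hx, mul_zero]

lemma span_le_of_orth_le {A B : Set E} {u : E} (hu : u ∈ (span ℂ A)ᗮ)
    (hle : (span ℂ B)ᗮ ≤ span ℂ {u}) : span ℂ A ≤ span ℂ B := by
  have h1 : span ℂ {u} ≤ (span ℂ A)ᗮ := by
    rw [Submodule.span_le]
    simpa using hu
  have h2 : (span ℂ B)ᗮ ≤ (span ℂ A)ᗮ := hle.trans h1
  have h3 := Submodule.orthogonal_le h2
  rwa [Submodule.orthogonal_orthogonal, Submodule.orthogonal_orthogonal] at h3

lemma master {m : ℕ} (g : Fin m → E) (Θ : Set ℂ) (θ₁ θ₂ : ℂ)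
    (hθ₁ : θ₁ ∈ Θ) (hne : θ₂ ≠ θ₁) (u₁ u₂ : E) (hu₁ : u₁ ≠ 0)
    (hu₂ : u₂ ∉ span ℂ {u₁})
    (hcov : ∀ i, ∃ θ ∈ Θ,
      (inner ℂ (g i) (u₁ - ((θ - θ₁) * (θ₂ - θ₁)⁻¹) • (u₁ - u₂)) : ℂ) = 0) :
    ¬ DoesPR (Set.range g) Θ := by
  intro hPR
  set h0 : E := (θ₂ - θ₁)⁻¹ • (u₁ - u₂) with hh0
  set f0 : E := θ₁ • h0 + u₁ with hf0
  have hyp : ∀ g' ∈ Set.range g, ∃ θ ∈ Θ, (inner ℂ g' f0 : ℂ) = θ * (inner ℂ g' h0 : ℂ) := by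
    rintro g' ⟨i, rfl⟩
    obtain ⟨θ, hθ, hz⟩ := hcov i
    refine ⟨θ, hθ, ?_⟩
    have hvec : f0 - θ • h0 = u₁ - ((θ - θ₁) * (θ₂ - θ₁)⁻¹) • (u₁ - u₂) := by
      rw [hf0, hh0]; module
    have hz2 : (inner ℂ (g i) (f0 - θ • h0) : ℂ) = 0 := by rw [hvec]; exact hz
    rw [inner_sub_right, inner_smul_right, sub_eq_zero] at hz2
    exact hz2
  obtain ⟨θ, hθ, hfθ⟩ := hPR f0 h0 hyp
  have h1 : u₁ = θ • h0 - θ₁ • h0 := by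
    have : u₁ = f0 - θ₁ • h0 := by rw [hf0]; module
    rwa [hfθ] at this
  have hu₁eq : u₁ = ((θ - θ₁) * (θ₂ - θ₁)⁻¹) • u₁ - ((θ - θ₁) * (θ₂ - θ₁)⁻¹) • u₂ :=
    calc u₁ = θ • h0 - θ₁ • h0 := h1
    _ = ((θ - θ₁) * (θ₂ - θ₁)⁻¹) • u₁ - ((θ - θ₁) * (θ₂ - θ₁)⁻¹) • u₂ := by
        rw [hh0]; module
  set β := (θ - θ₁) * (θ₂ - θ₁)⁻¹ with hβ
  by_cases hβ0 : β = 0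
  · rw [hβ0, zero_smul, zero_smul, sub_zero] at hu₁eq
    exact hu₁ hu₁eq
  · apply hu₂
    rw [Submodule.mem_span_singleton]
    refine ⟨β⁻¹ * (β - 1), ?_⟩
    have h2 : β • u₂ = β • u₁ - u₁ := eq_sub_of_add_eq' (eq_sub_iff_add_eq.mp hu₁eq)
    calc (β⁻¹ * (β - 1)) • u₁ = β⁻¹ • ((β - 1) • u₁) := by rw [smul_smul]
    _ = β⁻¹ • (β • u₂) := by rw [sub_smul, one_smul, ← h2]
    _ = u₂ := by rw [smul_smul, inv_mul_cancel₀ hβ0, one_smul]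

lemma exists_pair_part1 {m : ℕ} (hd : 2 ≤ d) (hm : m ≤ 2 * d - 2)
    (g : Fin m → E) :
    ∃ u₁ u₂ : E, u₁ ≠ 0 ∧ u₂ ∉ span ℂ {u₁} ∧
      ∀ i, (inner ℂ (g i) u₁ : ℂ) = 0 ∨ (inner ℂ (g i) u₂ : ℂ) = 0 := by
  classical
  set R : Set E := Set.range g with hR
  have hRfin : R.Finite := Set.finite_range g
  have hRcard : R.ncard ≤ m := by
    rw [hR, ← Set.image_univ]
    calc (g '' Set.univ).ncard ≤ (Set.univ : Set (Fin m)).ncard :=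
          Set.ncard_image_le Set.finite_univ
    _ = m := by simp [Set.ncard_univ]
  by_cases hr : finrank ℂ (span ℂ R) < d
  · obtain ⟨u₁, hu₁0, hu₁⟩ := exists_ne_zero_orth _ hr
    have hnt : ¬ ((⊤ : Submodule ℂ E) ≤ span ℂ {u₁}) := by
      intro hle
      have h1 := Submodule.finrank_mono hle
      rw [finrank_top, finrank_euclideanSpace_fin, finrank_span_singleton hu₁0] at h1
      omega
    obtain ⟨u₂, -, hu₂⟩ := SetLike.not_le_iff_exists.mp hnt
    refine ⟨u₁, u₂, hu₁0, hu₂, fun i => Or.inl ?_⟩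
    exact Submodule.inner_right_of_mem_orthogonal
      (Submodule.subset_span (Set.mem_range_self i)) hu₁
  · push_neg at hr
    have hRtop : span ℂ R = ⊤ := by
      apply Submodule.eq_top_of_finrank_eq
      have hle : finrank ℂ (span ℂ R) ≤ finrank ℂ E := Submodule.finrank_le _
      rw [finrank_euclideanSpace_fin] at hle ⊢
      omega
    obtain ⟨s, hsR, hs_span, hs_ind⟩ := exists_linearIndependent ℂ R
    have hsfin : s.Finite := hRfin.subset hsR
    have hscard : s.ncard = d := by
      haveI := hsfin.fintype
      have h1 := finrank_span_set_eq_card hs_ind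
      rw [hs_span, hRtop, finrank_top, finrank_euclideanSpace_fin] at h1
      rw [Set.ncard_eq_toFinset_card']
      omega
    obtain ⟨t₀, ht₀⟩ := Set.nonempty_of_ncard_ne_zero (by omega : s.ncard ≠ 0)
    set A₁ : Set E := s \ {t₀} with hA₁
    have hA₁sub : A₁ ⊆ s := Set.diff_subset
    have hA₁card : A₁.ncard = d - 1 := by
      rw [hA₁, Set.ncard_diff_singleton_of_mem ht₀, hscard]
    have hA₁rank : finrank ℂ (span ℂ A₁) < d :=
      lt_of_le_of_lt (finrank_span_le_ncard _ (hsfin.subset hA₁sub)) (by omega)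
    obtain ⟨u₁, hu₁0, hu₁⟩ := exists_ne_zero_orth _ hA₁rank
    set A₂ : Set E := R \ A₁ with hA₂
    have hA₂card : A₂.ncard ≤ d - 1 := by
      rw [hA₂, Set.ncard_diff (hA₁sub.trans hsR) (hsfin.subset hA₁sub), hA₁card]
      omega
    have hA₂rank : finrank ℂ (span ℂ A₂) < d :=
      lt_of_le_of_lt (finrank_span_le_ncard _ (hRfin.diff)) (by omega)
    have hnotle : ¬ ((span ℂ A₂)ᗮ ≤ span ℂ {u₁}) := by
      intro hle
      have h1 := span_le_of_orth_le hu₁ hle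
      have h2 : s ⊆ (span ℂ A₂ : Set E) := by
        intro x hx
        by_cases hxt : x = t₀
        · exact Submodule.subset_span (show x ∈ A₂ from ⟨hsR hx, fun hmem => hmem.2 hxt⟩)
        · exact h1 (Submodule.subset_span (show x ∈ A₁ from ⟨hx, by simpa using hxt⟩))
      have h3 : span ℂ s ≤ span ℂ A₂ := Submodule.span_le.mpr h2
      rw [hs_span, hRtop, top_le_iff] at h3
      rw [h3, finrank_top, finrank_euclideanSpace_fin] at hA₂rank
      omega
    obtain ⟨u₂, hu₂V, hu₂⟩ := SetLike.not_le_iff_exists.mp hnotle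
    refine ⟨u₁, u₂, hu₁0, hu₂, fun i => ?_⟩
    by_cases hgi : g i ∈ A₁
    · exact Or.inl (Submodule.inner_right_of_mem_orthogonal (Submodule.subset_span hgi) hu₁)
    · exact Or.inr (Submodule.inner_right_of_mem_orthogonal
        (Submodule.subset_span (show g i ∈ R \ A₁ from ⟨Set.mem_range_self i, hgi⟩)) hu₂V)

lemma exists_pair_part2 {m : ℕ} (hd : 2 ≤ d) (hm : m ≤ 2 * d - 1)
    (g : Fin m → E) (c₁ c₂ : ℂ) (hc₁ : c₁ ≠ 0) (hc₂ : c₂ ≠ 0) :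
    ∃ u₁ u₂ : E, u₁ ≠ 0 ∧ u₂ ∉ span ℂ {u₁} ∧
      ∀ i, (inner ℂ (g i) u₁ : ℂ) = 0 ∨ (inner ℂ (g i) u₂ : ℂ) = 0 ∨
        (inner ℂ (g i) (c₁ • u₁ + c₂ • u₂) : ℂ) = 0 := by
  classical
  set R : Set E := Set.range g with hR
  have hRfin : R.Finite := Set.finite_range g
  have hRcard : R.ncard ≤ m := by
    rw [hR, ← Set.image_univ]
    calc (g '' Set.univ).ncard ≤ (Set.univ : Set (Fin m)).ncard :=
          Set.ncard_image_le Set.finite_univ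
    _ = m := by simp [Set.ncard_univ]
  by_cases hr : finrank ℂ (span ℂ R) < d
  · obtain ⟨u₁, hu₁0, hu₁⟩ := exists_ne_zero_orth _ hr
    have hnt : ¬ ((⊤ : Submodule ℂ E) ≤ span ℂ {u₁}) := by
      intro hle
      have h1 := Submodule.finrank_mono hle
      rw [finrank_top, finrank_euclideanSpace_fin, finrank_span_singleton hu₁0] at h1
      omega
    obtain ⟨u₂, -, hu₂⟩ := SetLike.not_le_iff_exists.mp hnt
    refine ⟨u₁, u₂, hu₁0, hu₂, fun i => Or.inl ?_⟩
    exact Submodule.inner_right_of_mem_orthogonal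
      (Submodule.subset_span (Set.mem_range_self i)) hu₁
  · push_neg at hr
    have hRtop : span ℂ R = ⊤ := by
      apply Submodule.eq_top_of_finrank_eq
      have hle : finrank ℂ (span ℂ R) ≤ finrank ℂ E := Submodule.finrank_le _
      rw [finrank_euclideanSpace_fin] at hle ⊢
      omega
    by_cases hcase : ∃ x ∈ R, finrank ℂ (span ℂ (R \ {x})) < d
    · obtain ⟨x, hxR, hx⟩ := hcase
      obtain ⟨u₂, hu₂0, hu₂orth⟩ := exists_ne_zero_orth _ hx
      have hrankx : finrank ℂ (span ℂ ({x} : Set E)) < d := by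
        have h1 : finrank ℂ (span ℂ ({x} : Set E)) ≤ 1 := by
          have := finrank_span_le_ncard ({x} : Set E) (Set.finite_singleton x)
          simpa using this
        omega
      obtain ⟨u₁, hu₁0, hu₁orth⟩ := exists_ne_zero_orth _ hrankx
      have hxu₁ : (inner ℂ x u₁ : ℂ) = 0 :=
        Submodule.inner_right_of_mem_orthogonal (Submodule.subset_span (show x ∈ ({x} : Set E) from rfl)) hu₁orth
      have hxu₂ : (inner ℂ x u₂ : ℂ) ≠ 0 := by
        intro h0
        have hmem : u₂ ∈ (span ℂ R)ᗮ := by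
          apply mem_orth_span
          intro y hy
          by_cases hyx : y = x
          · rw [hyx]; exact h0
          · exact Submodule.inner_right_of_mem_orthogonal
              (Submodule.subset_span (show y ∈ R \ {x} from ⟨hy, hyx⟩)) hu₂orth
        rw [hRtop, Submodule.top_orthogonal_eq_bot] at hmem
        exact hu₂0 (by simpa using hmem)
      refine ⟨u₁, u₂, hu₁0, ?_, fun i => ?_⟩
      · intro hmem
        rw [Submodule.mem_span_singleton] at hmem
        obtain ⟨a, ha⟩ := hmem
        apply hxu₂
        rw [← ha, inner_smul_right, hxu₁, mul_zero]
      · by_cases hgx : g i = x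
        · exact Or.inl (hgx ▸ hxu₁)
        · exact Or.inr (Or.inl (Submodule.inner_right_of_mem_orthogonal
            (Submodule.subset_span (show g i ∈ R \ {x} from ⟨Set.mem_range_self i, hgx⟩)) hu₂orth))
    · push_neg at hcase
      obtain ⟨s, hsR, hs_span, hs_ind⟩ := exists_linearIndependent ℂ R
      have hsfin : s.Finite := hRfin.subset hsR
      have hscard : s.ncard = d := by
        haveI := hsfin.fintype
        have h1 := finrank_span_set_eq_card hs_ind
        rw [hs_span, hRtop, finrank_top, finrank_euclideanSpace_fin] at h1
        rw [Set.ncard_eq_toFinset_card']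
        omega
      obtain ⟨t₀, ht₀⟩ := Set.nonempty_of_ncard_ne_zero (by omega : s.ncard ≠ 0)
      set A₁ : Set E := s \ {t₀} with hA₁
      have hA₁sub : A₁ ⊆ s := Set.diff_subset
      have hA₁card : A₁.ncard = d - 1 := by
        rw [hA₁, Set.ncard_diff_singleton_of_mem ht₀, hscard]
      have hA₁rank : finrank ℂ (span ℂ A₁) < d :=
        lt_of_le_of_lt (finrank_span_le_ncard _ (hsfin.subset hA₁sub)) (by omega)
      obtain ⟨u₁, hu₁0, hu₁orth⟩ := exists_ne_zero_orth _ hA₁rank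
      have hscard_le : d ≤ R.ncard := by
        have h := Set.ncard_le_ncard hsR hRfin
        omega
      have hφu₁ : (inner ℂ t₀ u₁ : ℂ) ≠ 0 := by
        intro h0
        have hmem : u₁ ∈ (span ℂ s)ᗮ := by
          apply mem_orth_span
          intro y hy
          by_cases hyt : y = t₀
          · rw [hyt]; exact h0
          · exact Submodule.inner_right_of_mem_orthogonal
              (Submodule.subset_span (show y ∈ A₁ from ⟨hy, hyt⟩)) hu₁orth
        rw [hs_span, hRtop, Submodule.top_orthogonal_eq_bot] at hmem
        exact hu₁0 (by simpa using hmem)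
      set A₂ : Set E := R \ s with hA₂
      have hA₂card : A₂.ncard ≤ d - 1 := by
        rw [hA₂, Set.ncard_diff hsR hsfin, hscard]
        omega
      have hA₂rank : finrank ℂ (span ℂ A₂) < d :=
        lt_of_le_of_lt (finrank_span_le_ncard _ (hRfin.diff)) (by omega)
      have hnotle : ¬ ((span ℂ A₂)ᗮ ≤ span ℂ {u₁}) := by
        intro hle
        have h1 := span_le_of_orth_le hu₁orth hle
        have h2 : R \ {t₀} ⊆ (span ℂ A₂ : Set E) := by
          rintro x ⟨hxR, hxt⟩
          by_cases hxs : x ∈ s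
          · exact h1 (Submodule.subset_span (show x ∈ A₁ from ⟨hxs, hxt⟩))
          · exact Submodule.subset_span (show x ∈ A₂ from ⟨hxR, hxs⟩)
        have h3 : d ≤ finrank ℂ (span ℂ (R \ {t₀})) := hcase t₀ (hsR ht₀)
        have h4 : finrank ℂ (span ℂ (R \ {t₀})) ≤ finrank ℂ (span ℂ A₂) :=
          Submodule.finrank_mono (Submodule.span_le.mpr h2)
        omega
      by_cases hB : ∀ w ∈ (span ℂ A₂)ᗮ, (inner ℂ t₀ w : ℂ) = 0
      · have ht₀A₂ : t₀ ∈ span ℂ A₂ := by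
          have hmem : t₀ ∈ ((span ℂ A₂)ᗮ)ᗮ := by
            rw [Submodule.mem_orthogonal]
            intro w hw
            exact inner_eq_zero_symm.mp (hB w hw)
          rwa [Submodule.orthogonal_orthogonal] at hmem
        obtain ⟨u₂, hu₂V, hu₂s⟩ := SetLike.not_le_iff_exists.mp hnotle
        refine ⟨u₁, u₂, hu₁0, hu₂s, fun i => ?_⟩
        by_cases hgi : g i ∈ A₁
        · exact Or.inl (Submodule.inner_right_of_mem_orthogonal
            (Submodule.subset_span hgi) hu₁orth)
        · have hmem : g i ∈ span ℂ A₂ := by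
            by_cases hgit : g i = t₀
            · exact hgit ▸ ht₀A₂
            · by_cases hgis : g i ∈ s
              · exact absurd (show g i ∈ A₁ from ⟨hgis, by simpa using hgit⟩) hgi
              · exact Submodule.subset_span (show g i ∈ A₂ from ⟨Set.mem_range_self i, hgis⟩)
          exact Or.inr (Or.inl (Submodule.inner_right_of_mem_orthogonal hmem hu₂V))
      · push_neg at hB
        obtain ⟨w, hwV, hw0⟩ := hB
        set γ : ℂ := -(c₁ * (inner ℂ t₀ u₁ : ℂ)) / c₂ with hγ
        have hγ0 : γ ≠ 0 :=
          div_ne_zero (neg_ne_zero.mpr (mul_ne_zero hc₁ hφu₁)) hc₂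
        have key : ∃ u₂ ∈ (span ℂ A₂)ᗮ, (inner ℂ t₀ u₂ : ℂ) = γ ∧ u₂ ∉ span ℂ {u₁} := by
          set w0 : E := (γ / (inner ℂ t₀ w : ℂ)) • w with hw0def
          have hw0V : w0 ∈ (span ℂ A₂)ᗮ := Submodule.smul_mem _ _ hwV
          have hw0φ : (inner ℂ t₀ w0 : ℂ) = γ := by
            rw [hw0def, inner_smul_right, div_mul_cancel₀ _ hw0]
          by_cases h0 : w0 ∈ span ℂ {u₁}
          · by_cases hsub2 : ∃ w' ∈ (span ℂ A₂)ᗮ, (inner ℂ t₀ w' : ℂ) = 0 ∧ w' ∉ span ℂ {u₁}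
            · obtain ⟨w', hw'V, hw'0, hw's⟩ := hsub2
              refine ⟨w0 + w', Submodule.add_mem _ hw0V hw'V,
                by rw [inner_add_right, hw0φ, hw'0, add_zero], fun hmem => hw's ?_⟩
              have hweq : w' = (w0 + w') - w0 := by abel
              rw [hweq]
              exact Submodule.sub_mem _ hmem h0
            · exfalso
              push_neg at hsub2
              apply hnotle
              intro v hv
              have hv' : v - ((inner ℂ t₀ v : ℂ) / γ) • w0 ∈ (span ℂ A₂)ᗮ :=
                Submodule.sub_mem _ hv (Submodule.smul_mem _ _ hw0V)
              have hφv' : (inner ℂ t₀ (v - ((inner ℂ t₀ v : ℂ) / γ) • w0) : ℂ) = 0 := by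
                rw [inner_sub_right, inner_smul_right, hw0φ, div_mul_cancel₀ _ hγ0,
                  sub_self]
              have h1 := hsub2 _ hv' hφv'
              have h2 : v = (v - ((inner ℂ t₀ v : ℂ) / γ) • w0) + ((inner ℂ t₀ v : ℂ) / γ) • w0 := by
                abel
              rw [h2]
              exact Submodule.add_mem _ h1 (Submodule.smul_mem _ _ h0)
          · exact ⟨w0, hw0V, hw0φ, h0⟩
        obtain ⟨u₂, hu₂V, hu₂φ, hu₂s⟩ := key
        refine ⟨u₁, u₂, hu₁0, hu₂s, fun i => ?_⟩
        by_cases hgi : g i ∈ A₁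
        · exact Or.inl (Submodule.inner_right_of_mem_orthogonal
            (Submodule.subset_span hgi) hu₁orth)
        · by_cases hgit : g i = t₀
          · refine Or.inr (Or.inr ?_)
            rw [hgit, inner_add_right, inner_smul_right, inner_smul_right, hu₂φ, hγ,
              mul_comm c₂, div_mul_cancel₀ _ hc₂]
            ring
          · by_cases hgis : g i ∈ s
            · exact absurd (show g i ∈ A₁ from ⟨hgis, by simpa using hgit⟩) hgi
            · exact Or.inr (Or.inl (Submodule.inner_right_of_mem_orthogonal
                (Submodule.subset_span (show g i ∈ A₂ from ⟨Set.mem_range_self i, hgis⟩)) hu₂V))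

end PRAux

theorem stmt6 (d m : ℕ) (hd : 2 ≤ d) (g : Fin m → EuclideanSpace ℂ (Fin d)) :
    (m ≤ 2 * d - 2 →
      ∀ Θ : Set ℂ, Θ ⊆ unitCircle → (∃ θ₁ ∈ Θ, ∃ θ₂ ∈ Θ, θ₁ ≠ θ₂) →
        ¬ DoesPR (Set.range g) Θ) ∧
    (m = 2 * d - 1 →
      ∀ Θ : Set ℂ, Θ ⊆ unitCircle →
        (∃ θ₁ ∈ Θ, ∃ θ₂ ∈ Θ, ∃ θ₃ ∈ Θ, θ₁ ≠ θ₂ ∧ θ₁ ≠ θ₃ ∧ θ₂ ≠ θ₃) →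
        ¬ DoesPR (Set.range g) Θ) := by
  constructor
  · rintro hm Θ - ⟨θ₁, hθ₁, θ₂, hθ₂, hneq⟩
    obtain ⟨u₁, u₂, hu₁0, hu₂s, hdisj⟩ := PRAux.exists_pair_part1 hd hm g
    apply PRAux.master g Θ θ₁ θ₂ hθ₁ (Ne.symm hneq) u₁ u₂ hu₁0 hu₂s
    intro i
    rcases hdisj i with h | h
    · exact ⟨θ₁, hθ₁, by simpa using h⟩
    · refine ⟨θ₂, hθ₂, ?_⟩
      have hvec : u₁ - ((θ₂ - θ₁) * (θ₂ - θ₁)⁻¹) • (u₁ - u₂) = u₂ := by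
        rw [mul_inv_cancel₀ (sub_ne_zero.mpr (Ne.symm hneq)), one_smul, sub_sub_cancel]
      rw [hvec]
      exact h
  · rintro hm Θ - ⟨θ₁, hθ₁, θ₂, hθ₂, θ₃, hθ₃, h12, h13, h23⟩
    have hne21 : θ₂ - θ₁ ≠ 0 := sub_ne_zero.mpr (Ne.symm h12)
    have hc₁ : (θ₂ - θ₃) * (θ₂ - θ₁)⁻¹ ≠ 0 :=
      mul_ne_zero (sub_ne_zero.mpr h23) (inv_ne_zero hne21)
    have hc₂ : (θ₃ - θ₁) * (θ₂ - θ₁)⁻¹ ≠ 0 :=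
      mul_ne_zero (sub_ne_zero.mpr (Ne.symm h13)) (inv_ne_zero hne21)
    obtain ⟨u₁, u₂, hu₁0, hu₂s, hdisj⟩ :=
      PRAux.exists_pair_part2 hd (le_of_eq hm) g _ _ hc₁ hc₂
    apply PRAux.master g Θ θ₁ θ₂ hθ₁ (Ne.symm h12) u₁ u₂ hu₁0 hu₂s
    intro i
    rcases hdisj i with h | h | h
    · exact ⟨θ₁, hθ₁, by simpa using h⟩
    · refine ⟨θ₂, hθ₂, ?_⟩
      have hvec : u₁ - ((θ₂ - θ₁) * (θ₂ - θ₁)⁻¹) • (u₁ - u₂) = u₂ := by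
        rw [mul_inv_cancel₀ hne21, one_smul, sub_sub_cancel]
      rw [hvec]
      exact h
    · refine ⟨θ₃, hθ₃, ?_⟩
      have hvec : u₁ - ((θ₃ - θ₁) * (θ₂ - θ₁)⁻¹) • (u₁ - u₂) =
          ((θ₂ - θ₃) * (θ₂ - θ₁)⁻¹) • u₁ + ((θ₃ - θ₁) * (θ₂ - θ₁)⁻¹) • u₂ := by
        match_scalars
        · field_simp
          ring
        · ring
      rw [hvec]
      exact h
end
end

section
/- Let d ≥ 2, let m ≥ 2d, and let Θ ⊆ 𝕋 be finite and nonempty. Then there exists a nonzero polynomial p in the d·m complex entries of a matrix F = (g_1, …, g_m) ∈ ℂ^{d×m} (with columns g_j ∈ ℂ^d) such that for every F ∈ ℂ^{d×m} with p(F) ≠ 0, the set {g_1, …, g_m} does Θ-PR in ℂ^d. In particular, the collection of systems of m vectors doing Θ-PR in ℂ^d contains a nonempty Zariski-open subset of ℂ^{d×m}. -/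
open MeasureTheory Set

noncomputable section

/-- The `j`-th column of a `d × m` complex matrix, as a vector in `ℂ^d`. -/
def column (d m : ℕ) (F : Matrix (Fin d) (Fin m) ℂ) (j : Fin m) :
    EuclideanSpace ℂ (Fin d) :=
  WithLp.toLp 2 (fun i => F i j)

open MvPolynomial Matrix Finset

-- combinatorial lemma
lemma comb {d m : ℕ} (hdm : 2 * d ≤ m) (σ : Fin m → ℂ)
    (hσ : ∀ c : ℂ, d ≤ (Finset.univ.filter (fun j => σ j ≠ c)).card) :
    ∃ es : (Fin d ⊕ Fin d) → Fin m, Function.Injective es ∧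
      ∀ t, σ (es (Sum.inl t)) ≠ σ (es (Sum.inr t)) := by
  classical
  set L : List ℂ := (Finset.image σ Finset.univ).toList with hL
  set key : Fin m → ℕ := fun j => L.idxOf (σ j) with hkey
  have hkey_iff : ∀ j j', key j = key j' → σ j = σ j' := by
    intro j j' hjj
    have hj : σ j ∈ L := by simp [hL, Finset.mem_toList]
    have hj' : σ j' ∈ L := by simp [hL, Finset.mem_toList]
    exact (List.idxOf_inj hj).mp hjj
  set π := Tuple.sort key with hπ
  have hmono : Monotone (key ∘ π) := Tuple.monotone_sort key
  have hd_le : d ≤ m - d := by omega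
  have hpos1 : ∀ t : Fin d, (t : ℕ) < m := fun t => lt_of_lt_of_le t.2 (by omega)
  have hpos2 : ∀ t : Fin d, (t : ℕ) + (m - d) < m := fun t => by have := t.2; omega
  refine ⟨Sum.elim (fun t => π ⟨t, hpos1 t⟩) (fun t => π ⟨t + (m - d), hpos2 t⟩), ?_, ?_⟩
  · intro r s hrs
    rcases r with t | t <;> rcases s with t' | t' <;>
      simp only [Sum.elim_inl, Sum.elim_inr] at hrs <;>
      have := π.injective hrs
    · simp only [Fin.mk.injEq] at this
      exact congrArg Sum.inl (Fin.ext this)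
    · exfalso
      have h1 := congrArg Fin.val this
      simp only at h1
      have := t.2; have := t'.2; omega
    · exfalso
      have h1 := congrArg Fin.val this
      simp only at h1
      have := t.2; have := t'.2; omega
    · simp only [Fin.mk.injEq] at this
      exact congrArg Sum.inr (Fin.ext (by omega))
  · intro t hcontra
    simp only [Sum.elim_inl, Sum.elim_inr] at hcontra
    set a : Fin m := ⟨t, hpos1 t⟩
    set b : Fin m := ⟨t + (m - d), hpos2 t⟩
    set c : ℂ := σ (π a) with hc
    -- all s in Icc a b have σ (π s) = c
    have hkab : key (π a) = key (π b) := by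
      simp only [hkey]
      rw [← hc, hcontra]
    have hfiber : ∀ s ∈ Finset.Icc a b, σ (π s) = c := by
      intro s hs
      rw [Finset.mem_Icc] at hs
      have h1 : key (π a) ≤ key (π s) := hmono hs.1
      have h2 : key (π s) ≤ key (π b) := hmono hs.2
      have h3 : key (π s) = key (π a) := le_antisymm (hkab ▸ h2) h1
      rw [hc]
      exact hkey_iff _ _ h3
    have hcard1 : (Finset.Icc a b).card = m - d + 1 := by
      rw [Fin.card_Icc]
      simp only [a, b]
      omega
    have hsub : (Finset.Icc a b).image (fun s => π s) ⊆ Finset.univ.filter (fun j => σ j = c) := by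
      intro j hj
      rw [Finset.mem_image] at hj
      obtain ⟨s, hs, rfl⟩ := hj
      simp [hfiber s hs]
    have hcard2 : m - d + 1 ≤ (Finset.univ.filter (fun j => σ j = c)).card := by
      calc m - d + 1 = (Finset.Icc a b).card := hcard1.symm
        _ = ((Finset.Icc a b).image (fun s => π s)).card :=
            (Finset.card_image_of_injective _ π.injective).symm
        _ ≤ _ := Finset.card_le_card hsub
    have hcard3 := Finset.card_filter_add_card_filter_not
      (s := (Finset.univ : Finset (Fin m))) (p := fun j => σ j = c)
    have hd2 : d ≤ (Finset.univ.filter (fun j => ¬ σ j = c)).card := hσ c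
    simp only [Finset.card_univ, Fintype.card_fin] at hcard3
    omega

lemma span_lemma {d m : ℕ} (F : Matrix (Fin d) (Fin m) ℂ) (e : Fin d → Fin m)
    (hdet : (Matrix.of fun t i : Fin d => F i (e t)).det ≠ 0)
    (v : EuclideanSpace ℂ (Fin d))
    (hv : ∀ t, (inner ℂ (column d m F (e t)) v : ℂ) = 0) : v = 0 := by
  classical
  set N : Matrix (Fin d) (Fin d) ℂ :=
    (Matrix.of fun t i : Fin d => F i (e t)).map (starRingEnd ℂ) with hN
  have hdetN : N.det ≠ 0 := by
    have : N = (starRingEnd ℂ).mapMatrix (Matrix.of fun t i : Fin d => F i (e t)) := rfl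
    rw [this, ← RingHom.map_det]
    simpa using hdet
  have hmul : N.mulVec (fun i => v i) = 0 := by
    funext t
    have := hv t
    rw [PiLp.inner_apply] at this
    simpa [N, Matrix.mulVec, dotProduct, column, mul_comm] using this
  have := Matrix.eq_zero_of_mulVec_eq_zero hdetN hmul
  ext i
  exact congrFun this i

def prPoly (d m : ℕ) (es : Fin d ⊕ Fin d → Fin m) (τ : Fin d ⊕ Fin d → ℂ) :
    MvPolynomial (Fin d × Fin m) ℂ :=
  (Matrix.fromBlocks
    (Matrix.of fun t i : Fin d => X (i, es (Sum.inl t)))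
    (Matrix.of fun t i : Fin d =>
      MvPolynomial.C (-(starRingEnd ℂ (τ (Sum.inl t)))) * X (i, es (Sum.inl t)))
    (Matrix.of fun t i : Fin d => X (i, es (Sum.inr t)))
    (Matrix.of fun t i : Fin d =>
      MvPolynomial.C (-(starRingEnd ℂ (τ (Sum.inr t)))) * X (i, es (Sum.inr t)))).det

lemma prPoly_eval {d m : ℕ} (es : Fin d ⊕ Fin d → Fin m) (τ : Fin d ⊕ Fin d → ℂ)
    (F : Matrix (Fin d) (Fin m) ℂ) :
    MvPolynomial.eval (fun q : Fin d × Fin m => F q.1 q.2) (prPoly d m es τ) =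
    (Matrix.fromBlocks
      (Matrix.of fun t i : Fin d => F i (es (Sum.inl t)))
      (Matrix.of fun t i : Fin d => -(starRingEnd ℂ (τ (Sum.inl t))) * F i (es (Sum.inl t)))
      (Matrix.of fun t i : Fin d => F i (es (Sum.inr t)))
      (Matrix.of fun t i : Fin d =>
        -(starRingEnd ℂ (τ (Sum.inr t))) * F i (es (Sum.inr t)))).det := by
  rw [prPoly, RingHom.map_det]
  congr 1
  rw [RingHom.mapMatrix_apply, Matrix.fromBlocks_map]
  ext (t | t) (i | i) <;> simp [Matrix.map_apply]

lemma prPoly_ne_zero {d m : ℕ} (es : Fin d ⊕ Fin d → Fin m) (hes : Function.Injective es)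
    (τ : Fin d ⊕ Fin d → ℂ) (hτ : ∀ t, τ (Sum.inl t) ≠ τ (Sum.inr t)) :
    prPoly d m es τ ≠ 0 := by
  classical
  intro hzero
  set F : Matrix (Fin d) (Fin m) ℂ :=
    Matrix.of fun i j => if es (Sum.inl i) = j ∨ es (Sum.inr i) = j then (1 : ℂ) else 0 with hF
  have h0 : MvPolynomial.eval (fun q : Fin d × Fin m => F q.1 q.2) (prPoly d m es τ) = 0 := by
    rw [hzero]; simp
  rw [prPoly_eval] at h0
  have hA : (Matrix.of fun t i : Fin d => F i (es (Sum.inl t))) = (1 : Matrix (Fin d) (Fin d) ℂ) := by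
    ext t i
    simp only [Matrix.of_apply, hF, Matrix.one_apply, hes.eq_iff]
    by_cases hti : t = i
    · simp [hti]
    · simp [hti, Ne.symm hti]
  have hC : (Matrix.of fun t i : Fin d => F i (es (Sum.inr t))) = (1 : Matrix (Fin d) (Fin d) ℂ) := by
    ext t i
    simp only [Matrix.of_apply, hF, Matrix.one_apply, hes.eq_iff]
    by_cases hti : t = i
    · simp [hti]
    · simp [hti, Ne.symm hti]
  have hB : (Matrix.of fun t i : Fin d => -(starRingEnd ℂ (τ (Sum.inl t))) * F i (es (Sum.inl t)))
      = Matrix.diagonal (fun t => -(starRingEnd ℂ (τ (Sum.inl t)))) := by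
    ext t i
    simp only [Matrix.of_apply, hF, Matrix.diagonal_apply, hes.eq_iff]
    by_cases hti : t = i
    · simp [hti]
    · simp [hti, Ne.symm hti]
  have hD : (Matrix.of fun t i : Fin d => -(starRingEnd ℂ (τ (Sum.inr t))) * F i (es (Sum.inr t)))
      = Matrix.diagonal (fun t => -(starRingEnd ℂ (τ (Sum.inr t)))) := by
    ext t i
    simp only [Matrix.of_apply, hF, Matrix.diagonal_apply, hes.eq_iff]
    by_cases hti : t = i
    · simp [hti]
    · simp [hti, Ne.symm hti]
  rw [hA, hB, hC, hD, Matrix.det_fromBlocks_one₁₁, Matrix.one_mul,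
    Matrix.diagonal_sub, Matrix.det_diagonal] at h0
  obtain ⟨t, -, ht⟩ := Finset.prod_eq_zero_iff.mp h0
  rw [sub_eq_zero, neg_inj] at ht
  exact hτ t ((starRingEnd ℂ).injective ht).symm

lemma inner_column {d m : ℕ} (F : Matrix (Fin d) (Fin m) ℂ) (j : Fin m)
    (v : EuclideanSpace ℂ (Fin d)) :
    (inner ℂ (column d m F j) v : ℂ) = ∑ i, starRingEnd ℂ (F i j) * v i := by
  rw [PiLp.inner_apply]
  simp [column, RCLike.inner_apply, mul_comm]

lemma prPoly_kernel {d m : ℕ} (es : Fin d ⊕ Fin d → Fin m) (τ : Fin d ⊕ Fin d → ℂ)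
    (F : Matrix (Fin d) (Fin m) ℂ)
    (hne0 : MvPolynomial.eval (fun q : Fin d × Fin m => F q.1 q.2) (prPoly d m es τ) ≠ 0)
    (f h : EuclideanSpace ℂ (Fin d))
    (heq : ∀ r : Fin d ⊕ Fin d,
      (inner ℂ (column d m F (es r)) f : ℂ) = τ r * (inner ℂ (column d m F (es r)) h : ℂ)) :
    f = 0 ∧ h = 0 := by
  classical
  rw [prPoly_eval] at hne0
  set Q := Matrix.fromBlocks
      (Matrix.of fun t i : Fin d => F i (es (Sum.inl t)))
      (Matrix.of fun t i : Fin d => -(starRingEnd ℂ (τ (Sum.inl t))) * F i (es (Sum.inl t)))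
      (Matrix.of fun t i : Fin d => F i (es (Sum.inr t)))
      (Matrix.of fun t i : Fin d =>
        -(starRingEnd ℂ (τ (Sum.inr t))) * F i (es (Sum.inr t))) with hQ
  set z : Fin d ⊕ Fin d → ℂ :=
    Sum.elim (fun i => starRingEnd ℂ (f i)) (fun i => starRingEnd ℂ (h i)) with hz
  have key : ∀ r : Fin d ⊕ Fin d,
      (∑ i, F i (es r) * starRingEnd ℂ (f i))
        = starRingEnd ℂ (τ r) * ∑ i, F i (es r) * starRingEnd ℂ (h i) := by
    intro r
    have h1 := congrArg (starRingEnd ℂ) (heq r)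
    rw [inner_column, inner_column] at h1
    simpa [Complex.conj_conj] using h1
  have hmul : Q.mulVec z = 0 := by
    funext r
    have hk := key r
    have e2 : ∀ (c : ℂ) (w : Fin m) (g : EuclideanSpace ℂ (Fin d)),
        ∑ i, -(starRingEnd ℂ c) * F i w * starRingEnd ℂ (g i)
          = -(starRingEnd ℂ c * ∑ i, F i w * starRingEnd ℂ (g i)) := by
      intro c w g
      rw [Finset.mul_sum, ← Finset.sum_neg_distrib]
      exact Finset.sum_congr rfl fun i _ => by ring
    rcases r with t | t
    · simp only [hQ, hz, Matrix.mulVec, dotProduct, Fintype.sum_sum_type,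
        Matrix.fromBlocks_apply₁₁, Matrix.fromBlocks_apply₁₂, Matrix.of_apply,
        Sum.elim_inl, Sum.elim_inr, Pi.zero_apply]
      rw [e2, ← sub_eq_add_neg, sub_eq_zero]
      exact key (Sum.inl t)
    · simp only [hQ, hz, Matrix.mulVec, dotProduct, Fintype.sum_sum_type,
        Matrix.fromBlocks_apply₂₁, Matrix.fromBlocks_apply₂₂, Matrix.of_apply,
        Sum.elim_inl, Sum.elim_inr, Pi.zero_apply]
      rw [e2, ← sub_eq_add_neg, sub_eq_zero]
      exact key (Sum.inr t)
  have hz0 := Matrix.eq_zero_of_mulVec_eq_zero hne0 hmul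
  constructor
  · ext i
    have h2 := congrFun hz0 (Sum.inl i)
    rw [hz] at h2
    simp only [Sum.elim_inl, Pi.zero_apply] at h2
    simpa using congrArg (starRingEnd ℂ) h2
  · ext i
    have h2 := congrFun hz0 (Sum.inr i)
    rw [hz] at h2
    simp only [Sum.elim_inr, Pi.zero_apply] at h2
    simpa using congrArg (starRingEnd ℂ) h2

def minorPoly (d m : ℕ) (e : Fin d → Fin m) : MvPolynomial (Fin d × Fin m) ℂ :=
  (Matrix.of fun t i : Fin d => X (i, e t)).det

lemma minorPoly_eval {d m : ℕ} (e : Fin d → Fin m) (F : Matrix (Fin d) (Fin m) ℂ) :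
    MvPolynomial.eval (fun q : Fin d × Fin m => F q.1 q.2) (minorPoly d m e) =
    (Matrix.of fun t i : Fin d => F i (e t)).det := by
  rw [minorPoly, RingHom.map_det]
  congr 1
  ext t i
  simp [Matrix.map_apply]

lemma minorPoly_ne_zero {d m : ℕ} (e : Fin d → Fin m) (he : Function.Injective e) :
    minorPoly d m e ≠ 0 := by
  classical
  intro hzero
  set F : Matrix (Fin d) (Fin m) ℂ :=
    Matrix.of fun i j => if e i = j then (1 : ℂ) else 0 with hF
  have h0 : MvPolynomial.eval (fun q : Fin d × Fin m => F q.1 q.2) (minorPoly d m e) = 0 := by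
    rw [hzero]; simp
  rw [minorPoly_eval] at h0
  have h1 : (Matrix.of fun t i : Fin d => F i (e t)) = (1 : Matrix (Fin d) (Fin d) ℂ) := by
    ext t i
    simp only [Matrix.of_apply, hF, Matrix.one_apply, he.eq_iff]
    by_cases hti : t = i
    · simp [hti]
    · simp [hti, Ne.symm hti]
  rw [h1, Matrix.det_one] at h0
  exact one_ne_zero h0

theorem stmt7 (d m : ℕ) (hd : 2 ≤ d) (hm : 2 * d ≤ m)
    (Θ : Set ℂ) (hΘ : Θ ⊆ unitCircle) (hfin : Θ.Finite) (hne : Θ.Nonempty) :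
    ∃ p : MvPolynomial (Fin d × Fin m) ℂ, p ≠ 0 ∧
      ∀ F : Matrix (Fin d) (Fin m) ℂ,
        MvPolynomial.eval (fun q => F q.1 q.2) p ≠ 0 →
        DoesPR (Set.range (column d m F)) Θ := by
  classical
  obtain ⟨θdef, hθdef⟩ := hne
  set idx : Finset (((Fin d ⊕ Fin d) ↪ Fin m) × ((Fin d ⊕ Fin d) → ℂ)) :=
    (Finset.univ ×ˢ Fintype.piFinset fun _ => hfin.toFinset).filter
      (fun x => ∀ t, x.2 (Sum.inl t) ≠ x.2 (Sum.inr t)) with hidx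
  refine ⟨(∏ e : Fin d ↪ Fin m, minorPoly d m e) *
      ∏ x ∈ idx, prPoly d m x.1 x.2, ?_, ?_⟩
  · apply mul_ne_zero
    · rw [Finset.prod_ne_zero_iff]
      intro e _
      exact minorPoly_ne_zero e e.injective
    · rw [Finset.prod_ne_zero_iff]
      intro x hx
      rw [hidx, Finset.mem_filter] at hx
      exact prPoly_ne_zero x.1 x.1.injective x.2 hx.2
  · intro F hFne
    rw [_root_.map_mul] at hFne
    obtain ⟨hne1, hne2⟩ := mul_ne_zero_iff.mp hFne
    rw [map_prod] at hne1 hne2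
    have h1 : ∀ e : Fin d ↪ Fin m,
        MvPolynomial.eval (fun q : Fin d × Fin m => F q.1 q.2) (minorPoly d m e) ≠ 0 :=
      fun e => Finset.prod_ne_zero_iff.mp hne1 e (Finset.mem_univ e)
    have h2 : ∀ x ∈ idx,
        MvPolynomial.eval (fun q : Fin d × Fin m => F q.1 q.2) (prPoly d m x.1 x.2) ≠ 0 :=
      fun x hx => Finset.prod_ne_zero_iff.mp hne2 x hx
    intro f h hx
    have hx' : ∀ j : Fin m, ∃ θ, θ ∈ Θ ∧
        (inner ℂ (column d m F j) f : ℂ) = θ * (inner ℂ (column d m F j) h : ℂ) := by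
      intro j
      obtain ⟨θ, hθ, heq⟩ := hx (column d m F j) ⟨j, rfl⟩
      exact ⟨θ, hθ, heq⟩
    choose σ hσΘ hσeq using hx'
    by_cases hcase : ∃ θ0 ∈ Θ, ((Finset.univ.filter (fun j => σ j ≠ θ0)).card < d)
    · -- dominated case: f = θ0 • h
      obtain ⟨θ0, hθ0, hlt⟩ := hcase
      have hcards := Finset.card_filter_add_card_filter_not
        (s := (Finset.univ : Finset (Fin m))) (p := fun j => σ j = θ0)
      have hlt' : ((Finset.univ.filter (fun j => ¬ σ j = θ0)).card < d) := hlt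
      have hm' : (Finset.univ : Finset (Fin m)).card = m := by simp
      have hT : d ≤ (Finset.univ.filter (fun j => σ j = θ0)).card := by omega
      obtain ⟨S, hST, hScard⟩ := Finset.exists_subset_card_eq hT
      set e : Fin d → Fin m := fun t => (S.orderIsoOfFin hScard t : Fin m) with he
      have heinj : Function.Injective e := fun a b hab => by
        have := (S.orderIsoOfFin hScard).injective (Subtype.ext hab)
        exact this
      have hdet := h1 ⟨e, heinj⟩
      rw [minorPoly_eval] at hdet
      have hv : ∀ t, (inner ℂ (column d m F (e t)) (f - θ0 • h) : ℂ) = 0 := by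
        intro t
        have hmem : e t ∈ S := (S.orderIsoOfFin hScard t).2
        have hσet : σ (e t) = θ0 := by
          have := hST hmem
          rw [Finset.mem_filter] at this
          exact this.2
        rw [inner_sub_right, inner_smul_right, ← hσet, ← hσeq (e t), sub_self]
      have := span_lemma F e hdet (f - θ0 • h) hv
      exact ⟨θ0, hθ0, sub_eq_zero.mp this⟩
    · -- balanced case: f = h = 0
      push_neg at hcase
      have hall : ∀ c : ℂ, d ≤ (Finset.univ.filter (fun j => σ j ≠ c)).card := by
        intro c
        by_cases hc : c ∈ Θ
        · exact hcase c hc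
        · have huniv : Finset.univ.filter (fun j : Fin m => σ j ≠ c) = Finset.univ := by
            apply Finset.filter_true_of_mem
            intro j _
            exact fun hh => hc (hh ▸ hσΘ j)
          rw [huniv]
          simp only [Finset.card_univ, Fintype.card_fin]
          omega
      obtain ⟨es, hesinj, hesne⟩ := comb hm σ hall
      have hmem : ((⟨es, hesinj⟩ : (Fin d ⊕ Fin d) ↪ Fin m), fun r => σ (es r)) ∈ idx := by
        rw [hidx, Finset.mem_filter]
        refine ⟨Finset.mem_product.mpr ⟨Finset.mem_univ _, ?_⟩, ?_⟩
        · rw [Fintype.mem_piFinset]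
          intro r
          exact hfin.mem_toFinset.mpr (hσΘ (es r))
        · exact hesne
      have hdet := h2 _ hmem
      obtain ⟨hf0, hh0⟩ := prPoly_kernel es (fun r => σ (es r)) F hdet f h
        (fun r => hσeq (es r))
      exact ⟨θdef, hθdef, by rw [hf0, hh0, smul_zero]⟩
end
end

section
/- Let d ≥ 2 and let Θ ⊆ 𝕋 be countable and nonempty. Define N(ℂ^d, Θ) as the minimum of all m ∈ ℕ for which there exists a set G ⊆ ℂ^d with exactly m elements that does Θ-PR in ℂ^d. Then N(ℂ^d, Θ) = d if |Θ| = 1, N(ℂ^d, Θ) = 2d − 1 if |Θ| = 2, and N(ℂ^d, Θ) = 2d if |Θ| ≥ 3. -/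
open MeasureTheory Set

noncomputable section

/-- The minimal number of vectors in `ℂ^d` doing `Θ`-PR. -/
def minPR (d : ℕ) (Θ : Set ℂ) : ℕ :=
  sInf {m : ℕ | ∃ G : Set (EuclideanSpace ℂ (Fin d)), G.Finite ∧ G.ncard = m ∧ DoesPR G Θ}

namespace PRAux

open Finset Submodule Module

abbrev Euc (d : ℕ) := EuclideanSpace ℂ (Fin d)

variable {d : ℕ} {Θ : Set ℂ}

/-- the subspace orthogonal to a set of vectors -/
def orthSet (S : Set (Euc d)) : Submodule ℂ (Euc d) := (Submodule.span ℂ S)ᗮ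

lemma mem_orthSet {S : Set (Euc d)} {x : Euc d} :
    x ∈ orthSet S ↔ ∀ g ∈ S, (inner ℂ g x : ℂ) = 0 := by
  rw [orthSet, Submodule.mem_orthogonal]
  constructor
  · intro h g hg; exact h g (Submodule.subset_span hg)
  · intro h u hu
    induction hu using Submodule.span_induction with
    | mem g hg => exact h g hg
    | zero => simp
    | add a b _ _ ha hb => rw [inner_add_left, ha, hb, add_zero]
    | smul c a _ ha => rw [inner_smul_left, ha, mul_zero]

lemma finrank_span_le_ncard_s9 {S : Set (Euc d)} (hS : S.Finite) :
    finrank ℂ (Submodule.span ℂ S) ≤ S.ncard := by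
  have h := finrank_span_finset_le_card (R := ℂ) hS.toFinset
  rw [Set.Finite.coe_toFinset] at h
  have hcards : S.ncard = hS.toFinset.card := by
    rw [← Set.ncard_coe_finset hS.toFinset, Set.Finite.coe_toFinset]
  rw [hcards]
  exact h

lemma finrank_orthSet {S : Set (Euc d)} (hS : S.Finite) :
    d - S.ncard ≤ finrank ℂ (orthSet S) := by
  have h1 := Submodule.finrank_add_finrank_orthogonal (𝕜 := ℂ) (Submodule.span ℂ S)
  rw [finrank_euclideanSpace_fin] at h1
  have h2 := finrank_span_le_ncard_s9 hS
  rw [orthSet]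
  omega

lemma exists_orth {S : Set (Euc d)} (hS : S.Finite) (hcard : S.ncard < d) :
    ∃ w : Euc d, w ≠ 0 ∧ ∀ g ∈ S, (inner ℂ g w : ℂ) = 0 := by
  have h1 := finrank_orthSet hS
  have h2 : orthSet S ≠ ⊥ := by
    intro hb
    rw [hb, finrank_bot] at h1
    omega
  obtain ⟨w, hwK, hw0⟩ := Submodule.exists_mem_ne_zero_of_ne_bot h2
  exact ⟨w, hw0, mem_orthSet.1 hwK⟩

/-- Counterexample from a vector orthogonal to all of `G`. -/
lemma CE0 (G : Set (Euc d)) (hne : Θ.Nonempty) (w : Euc d) (hw : w ≠ 0)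
    (horth : ∀ g ∈ G, (inner ℂ g w : ℂ) = 0) : ¬ DoesPR G Θ := by
  intro hPR
  obtain ⟨θ₀, hθ₀⟩ := hne
  obtain ⟨θ, _, hfh⟩ := hPR w 0 (fun g hg => ⟨θ₀, hθ₀, by simp [horth g hg]⟩)
  rw [smul_zero] at hfh
  exact hw hfh

/-- The master counterexample lemma (two or three phases). -/
lemma CE3 (G P Q R : Set (Euc d)) (hcov : ∀ g ∈ G, g ∈ P ∨ g ∈ Q ∨ g ∈ R)
    (α β γ : ℂ) (hα : α ∈ Θ) (hβ : β ∈ Θ) (hγ : γ ∈ Θ) (hab : α ≠ β)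
    (u v : Euc d)
    (hu : ∀ g ∈ P, (inner ℂ g u : ℂ) = 0) (hv : ∀ g ∈ Q, (inner ℂ g v : ℂ) = 0)
    (hr : ∀ g ∈ R, (inner ℂ g ((β - γ) • u + (γ - α) • v) : ℂ) = 0)
    (hnc : ∀ θ ∈ Θ, (β - θ) • u ≠ (α - θ) • v) : ¬ DoesPR G Θ := by
  intro hPR
  have hba : (β - α) ≠ 0 := sub_ne_zero.2 (Ne.symm hab)
  set e : ℂ := (β - α)⁻¹ with he
  have he0 : e ≠ 0 := inv_ne_zero hba
  set h : Euc d := e • (u - v) with hh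
  set f : Euc d := e • (β • u - α • v) with hf
  have key : ∀ θ : ℂ, f - θ • h = e • ((β - θ) • u + (θ - α) • v) := by
    intro θ; rw [hf, hh]; module
  clear_value f h e
  have inner_key : ∀ (g : Euc d) (θ : ℂ),
      (inner ℂ g (f - θ • h) : ℂ) = e * ((β - θ) * (inner ℂ g u : ℂ) + (θ - α) * (inner ℂ g v : ℂ)) := by
    intro g θ
    rw [key, inner_smul_right, inner_add_right, inner_smul_right, inner_smul_right]
  have hyp : ∀ g ∈ G, ∃ θ ∈ Θ, (inner ℂ g f : ℂ) = θ * (inner ℂ g h : ℂ) := by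
    intro g hg
    have conv : ∀ θ : ℂ, (inner ℂ g (f - θ • h) : ℂ) = 0 →
        (inner ℂ g f : ℂ) = θ * (inner ℂ g h : ℂ) := by
      intro θ hθ
      rw [inner_sub_right, inner_smul_right, sub_eq_zero] at hθ
      exact hθ
    rcases hcov g hg with hgP | hgQ | hgR
    · exact ⟨α, hα, conv α (by rw [inner_key]; rw [hu g hgP]; ring)⟩
    · exact ⟨β, hβ, conv β (by rw [inner_key]; rw [hv g hgQ]; ring)⟩
    · refine ⟨γ, hγ, conv γ ?_⟩
      have := hr g hgR
      rw [inner_add_right, inner_smul_right, inner_smul_right] at this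
      rw [inner_key]
      rw [mul_eq_zero]; right; linear_combination this
  obtain ⟨θ, hθ, hfh⟩ := hPR f h hyp
  have : f - θ • h = 0 := by rw [hfh]; abel
  rw [key] at this
  rcases smul_eq_zero.1 this with h1 | h2
  · exact he0 h1
  · apply hnc θ hθ
    have : (β - θ) • u = -((θ - α) • v) := by
      rw [eq_neg_iff_add_eq_zero]; exact h2
    rw [this]
    module

/-- splitting a finite set into two pieces of bounded size -/
lemma split_set {X : Type*} (S : Set X) (hS : S.Finite) (m n : ℕ) (h : S.ncard ≤ m + n) :
    ∃ A B : Set X, S = A ∪ B ∧ A.Finite ∧ B.Finite ∧ A.ncard ≤ m ∧ B.ncard ≤ n := by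
  classical
  have hmin : min m hS.toFinset.card ≤ hS.toFinset.card := min_le_right _ _
  obtain ⟨t, hts, htc⟩ := Finset.exists_subset_card_eq hmin
  have hcards : hS.toFinset.card = S.ncard := by
    rw [← Set.ncard_coe_finset hS.toFinset, Set.Finite.coe_toFinset]
  refine ⟨↑t, ↑(hS.toFinset \ t), ?_, t.finite_toSet, (hS.toFinset \ t).finite_toSet, ?_, ?_⟩
  · rw [← Finset.coe_union, Finset.union_sdiff_of_subset hts, Set.Finite.coe_toFinset]
  · rw [Set.ncard_coe_finset, htc]; exact min_le_left _ _
  · rw [Set.ncard_coe_finset, Finset.card_sdiff_of_subset hts, htc]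
    omega

lemma LB1 (hne : Θ.Nonempty) (G : Set (Euc d)) (hG : G.Finite)
    (hcard : G.ncard < d) : ¬ DoesPR G Θ := by
  obtain ⟨w, hw0, hw⟩ := exists_orth hG hcard
  exact CE0 G hne w hw0 hw

lemma LB2 (hd : 2 ≤ d) (α β : ℂ) (hab : α ≠ β) (hT : Θ = {α, β})
    (G : Set (Euc d)) (hG : G.Finite) (hcard : G.ncard ≤ 2 * d - 2) : ¬ DoesPR G Θ := by
  obtain ⟨A, B, hS, hAf, hBf, hAc, hBc⟩ := split_set G hG (d - 1) (d - 1) (by omega)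
  obtain ⟨u, hu0, hu⟩ := exists_orth hAf (by omega)
  obtain ⟨v, hv0, hv⟩ := exists_orth hBf (by omega)
  have hba : (β - α) ≠ 0 := sub_ne_zero.2 (Ne.symm hab)
  have hab' : (α - β) ≠ 0 := sub_ne_zero.2 hab
  refine CE3 G A B ∅ ?_ α β α (by rw [hT]; simp) (by rw [hT]; simp) (by rw [hT]; simp)
    hab u v hu hv (by simp) ?_
  · intro g hg
    rw [hS] at hg
    rcases hg with hg | hg
    · exact Or.inl hg
    · exact Or.inr (Or.inl hg)
  · intro θ hθ heq
    rw [hT] at hθ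
    rcases hθ with rfl | rfl
    · rw [sub_self, zero_smul, smul_eq_zero] at heq
      rcases heq with h | h
      · exact hba h
      · exact hu0 h
    · rw [sub_self, zero_smul] at heq
      rcases smul_eq_zero.1 heq.symm with h | h
      · exact hab' h
      · exact hv0 h

/-- a pair is independent when the first is not a multiple of the (nonzero) second -/
lemma indep_of_not_mem_span {u v : Euc d} (hv0 : v ≠ 0) (h : u ∉ Submodule.span ℂ {v}) :
    ∀ s t : ℂ, s • u + t • v = 0 → s = 0 ∧ t = 0 := by
  intro s t hst
  by_cases hs : s = 0
  · subst hs
    rw [zero_smul, zero_add] at hst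
    rcases smul_eq_zero.1 hst with h1 | h1
    · exact ⟨rfl, h1⟩
    · exact absurd h1 hv0
  · exfalso
    apply h
    rw [Submodule.mem_span_singleton]
    refine ⟨-(s⁻¹ * t), ?_⟩
    have : u = -(s⁻¹ * t) • v := by
      have hs' : s • u = -(t • v) := by
        rw [eq_neg_iff_add_eq_zero]; exact hst
      have := congrArg (fun x => s⁻¹ • x) hs'
      simp only [smul_smul, inv_mul_cancel₀ hs, one_smul, smul_neg] at this
      rw [this]; module
    rw [this]

lemma indep_swap {u v : Euc d} (h : ∀ s t : ℂ, s • u + t • v = 0 → s = 0 ∧ t = 0) :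
    ∀ s t : ℂ, s • v + t • u = 0 → s = 0 ∧ t = 0 := by
  intro s t hst
  have := h t s (by rw [add_comm]; exact hst)
  exact ⟨this.2, this.1⟩

lemma hnc_of_indep {α β : ℂ} {u v : Euc d} (hab : α ≠ β)
    (hind : ∀ s t : ℂ, s • u + t • v = 0 → s = 0 ∧ t = 0) :
    ∀ θ ∈ Θ, (β - θ) • u ≠ (α - θ) • v := by
  intro θ _ heq
  have h0 : (β - θ) • u + (-(α - θ)) • v = 0 := by
    rw [neg_smul, heq]; abel
  obtain ⟨h1, h2⟩ := hind _ _ h0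
  apply hab
  have e1 : β = θ := sub_eq_zero.1 h1
  have e2 : α = θ := sub_eq_zero.1 (neg_eq_zero.1 h2)
  rw [e1, e2]

/-- either a pair of nonzero elements of U, V is independent, or U ∩ V ≠ 0 -/
lemma indep_or (U V : Submodule ℂ (Euc d)) {u₀ v₀ : Euc d}
    (hu : u₀ ∈ U) (hu0 : u₀ ≠ 0) (hv : v₀ ∈ V) (hv0 : v₀ ≠ 0) :
    (∀ s t : ℂ, s • u₀ + t • v₀ = 0 → s = 0 ∧ t = 0) ∨ ∃ w, w ≠ 0 ∧ w ∈ U ∧ w ∈ V := by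
  by_cases h : ∀ s t : ℂ, s • u₀ + t • v₀ = 0 → s = 0 ∧ t = 0
  · exact Or.inl h
  right
  push_neg at h
  obtain ⟨s, t, hst, hne⟩ := h
  have ht : t ≠ 0 := by
    rintro rfl
    rw [zero_smul, add_zero] at hst
    rcases smul_eq_zero.1 hst with h1 | h1
    · exact hne h1 rfl
    · exact absurd h1 hu0
  have hveq : v₀ = (-(t⁻¹ * s)) • u₀ := by
    have hs' : t • v₀ = -(s • u₀) := by
      rw [eq_neg_iff_add_eq_zero, add_comm]; exact hst
    have := congrArg (fun x => t⁻¹ • x) hs'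
    simp only [smul_smul, inv_mul_cancel₀ ht, one_smul, smul_neg] at this
    rw [this]; module
  exact ⟨v₀, hv0, by rw [hveq]; exact U.smul_mem _ hu, hv⟩


lemma LB3 (hd : 2 ≤ d) (α β γ : ℂ) (hα : α ∈ Θ) (hβ : β ∈ Θ) (hγ : γ ∈ Θ)
    (hab : α ≠ β) (hag : α ≠ γ) (hbg : β ≠ γ)
    (G : Set (Euc d)) (hG : G.Finite) (hcard : G.ncard ≤ 2 * d - 1) : ¬ DoesPR G Θ := by
  classical
  intro hPR
  -- Step 1 : no nonzero vector orthogonal to all of G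
  have hspan : ∀ w : Euc d, w ≠ 0 → ¬ (∀ g ∈ G, (inner ℂ g w : ℂ) = 0) := by
    intro w hw0 hw
    exact CE0 G ⟨α, hα⟩ w hw0 hw hPR
  -- Step 2 : split G
  obtain ⟨A, B', hS1, hAf, hB'f, hAc, hB'c⟩ := split_set G hG (d - 1) d (by omega)
  obtain ⟨B, C, hS2, hBf, hCf, hBc, hCc⟩ := split_set B' hB'f (d - 1) 1 (by omega)
  have hcov : ∀ g ∈ G, g ∈ A ∨ g ∈ B ∨ g ∈ C := by
    intro g hg
    rw [hS1] at hg
    rcases hg with h | h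
    · exact Or.inl h
    · rw [hS2] at h; rcases h with h | h
      · exact Or.inr (Or.inl h)
      · exact Or.inr (Or.inr h)
  set U : Submodule ℂ (Euc d) := orthSet A with hU
  set V : Submodule ℂ (Euc d) := orthSet B with hV
  -- nonzero elements of U and V
  have hUex : ∃ u₀, u₀ ∈ U ∧ u₀ ≠ 0 := by
    have h1 := finrank_orthSet hAf
    have h2 : U ≠ ⊥ := by
      intro hb; rw [← hU, hb, finrank_bot] at h1; omega
    obtain ⟨u₀, h3, h4⟩ := Submodule.exists_mem_ne_zero_of_ne_bot h2
    exact ⟨u₀, h3, h4⟩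
  have hVex : ∃ v₀, v₀ ∈ V ∧ v₀ ≠ 0 := by
    have h1 := finrank_orthSet hBf
    have h2 : V ≠ ⊥ := by
      intro hb; rw [← hV, hb, finrank_bot] at h1; omega
    obtain ⟨v₀, h3, h4⟩ := Submodule.exists_mem_ne_zero_of_ne_bot h2
    exact ⟨v₀, h3, h4⟩
  obtain ⟨u₀, hu₀U, hu₀0⟩ := hUex
  obtain ⟨v₀, hv₀V, hv₀0⟩ := hVex
  have hUmem : ∀ x, x ∈ U → ∀ g ∈ A, (inner ℂ g x : ℂ) = 0 := fun x hx => mem_orthSet.1 hx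
  have hVmem : ∀ x, x ∈ V → ∀ g ∈ B, (inner ℂ g x : ℂ) = 0 := fun x hx => mem_orthSet.1 hx
  -- C is empty or a singleton
  rcases C.eq_empty_or_nonempty with hCe | ⟨c, hc⟩
  · -- C empty : two-phase argument
    subst hCe
    rcases indep_or U V hu₀U hu₀0 hv₀V hv₀0 with hind | ⟨w, hw0, hwU, hwV⟩
    · exact CE3 G A B ∅ hcov α β γ hα hβ hγ hab u₀ v₀
        (hUmem _ hu₀U) (hVmem _ hv₀V) (by simp) (hnc_of_indep hab hind) hPR
    · apply hspan w hw0
      intro g hg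
      rcases hcov g hg with h | h | h
      · exact hUmem _ hwU g h
      · exact hVmem _ hwV g h
      · exact absurd h (Set.notMem_empty g)
  · -- C = {c}
    have hCsub : ∀ x ∈ C, x = c := by
      intro x hx
      by_contra hxc
      have : ({x, c} : Set (Euc d)).ncard ≤ C.ncard :=
        Set.ncard_le_ncard (by rintro y (rfl | rfl) <;> assumption) hCf
      rw [Set.ncard_pair hxc] at this
      omega
    by_cases hU0 : ∀ x ∈ U, (inner ℂ c x : ℂ) = 0
    · -- Branch I : phases α on A ∪ C, β on B
      rcases indep_or U V hu₀U hu₀0 hv₀V hv₀0 with hind | ⟨w, hw0, hwU, hwV⟩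
      · refine CE3 G (A ∪ C) B ∅ ?_ α β γ hα hβ hγ hab u₀ v₀ ?_ (hVmem _ hv₀V)
          (by simp) (hnc_of_indep hab hind) hPR
        · intro g hg
          rcases hcov g hg with h | h | h
          · exact Or.inl (Or.inl h)
          · exact Or.inr (Or.inl h)
          · exact Or.inl (Or.inr h)
        · intro g hg
          rcases hg with h | h
          · exact hUmem _ hu₀U g h
          · rw [hCsub g h]; exact hU0 _ hu₀U
      · apply hspan w hw0
        intro g hg
        rcases hcov g hg with h | h | h
        · exact hUmem _ hwU g h
        · exact hVmem _ hwV g h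
        · rw [hCsub g h]; exact hU0 _ hwU
    · push_neg at hU0
      obtain ⟨u₁, hu₁U, hu₁c⟩ := hU0
      have hu₁0 : u₁ ≠ 0 := by
        rintro rfl; exact hu₁c (inner_zero_right c)
      by_cases hV0 : ∀ x ∈ V, (inner ℂ c x : ℂ) = 0
      · -- Branch II : phases α on A, β on B ∪ C
        rcases indep_or U V hu₁U hu₁0 hv₀V hv₀0 with hind | ⟨w, hw0, hwU, hwV⟩
        · refine CE3 G A (B ∪ C) ∅ ?_ α β γ hα hβ hγ hab u₁ v₀ (hUmem _ hu₁U) ?_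
            (by simp) (hnc_of_indep hab hind) hPR
          · intro g hg
            rcases hcov g hg with h | h | h
            · exact Or.inl h
            · exact Or.inr (Or.inl (Or.inl h))
            · exact Or.inr (Or.inl (Or.inr h))
          · intro g hg
            rcases hg with h | h
            · exact hVmem _ hv₀V g h
            · rw [hCsub g h]; exact hV0 _ hv₀V
        · apply hspan w hw0
          intro g hg
          rcases hcov g hg with h | h | h
          · exact hUmem _ hwU g h
          · exact hVmem _ hwV g h
          · rw [hCsub g h]; exact hV0 _ hwV
      · push_neg at hV0
        obtain ⟨v₁, hv₁V, hv₁c⟩ := hV0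
        have hv₁0 : v₁ ≠ 0 := by
          rintro rfl; exact hv₁c (inner_zero_right c)
        have hbg' : (β - γ) ≠ 0 := sub_ne_zero.2 hbg
        have hga' : (γ - α) ≠ 0 := sub_ne_zero.2 (Ne.symm hag)
        by_cases hdep : v₁ ∈ Submodule.span ℂ {u₁}
        · -- v₁ = k • u₁
          obtain ⟨k, hk⟩ := Submodule.mem_span_singleton.1 hdep
          have hk0 : k ≠ 0 := by
            rintro rfl; rw [zero_smul] at hk; exact hv₁0 hk.symm
          have hu₁V : u₁ ∈ V := by
            have : u₁ = k⁻¹ • v₁ := by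
              rw [← hk, smul_smul, inv_mul_cancel₀ hk0, one_smul]
            rw [this]; exact V.smul_mem _ hv₁V
          by_cases hU1 : ∀ x ∈ U, x ∈ Submodule.span ℂ {u₁}
          · by_cases hV1 : ∀ x ∈ V, x ∈ Submodule.span ℂ {u₁}
            · -- Branch III.d : U, V ⊆ span u₁ ; use cover (A ∪ B, C)
              -- find v ⊥ c with v ∉ span u₁
              have hker : ¬ ∀ x ∈ orthSet {c}, x ∈ Submodule.span ℂ {u₁} := by
                intro hall
                have hle : orthSet {c} ≤ Submodule.span ℂ {u₁} := hall
                have h1 : d - 1 ≤ finrank ℂ (orthSet ({c} : Set (Euc d))) := by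
                  have := finrank_orthSet (Set.finite_singleton c)
                  rwa [Set.ncard_singleton] at this
                have h2 : finrank ℂ (Submodule.span ℂ ({u₁} : Set (Euc d))) = 1 :=
                  finrank_span_singleton hu₁0
                have h3 : finrank ℂ (orthSet ({c} : Set (Euc d))) ≤ 1 := by
                  have := Submodule.finrank_mono hle
                  omega
                have h4 : finrank ℂ (orthSet ({c} : Set (Euc d)))
                    = finrank ℂ (Submodule.span ℂ ({u₁} : Set (Euc d))) := by omega
                have h5 : orthSet ({c} : Set (Euc d)) = Submodule.span ℂ {u₁} :=
                  Submodule.eq_of_le_of_finrank_le hle (by omega)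
                have : u₁ ∈ orthSet ({c} : Set (Euc d)) := by
                  rw [h5]; exact Submodule.mem_span_singleton_self u₁
                exact hu₁c (mem_orthSet.1 this c rfl)
              push_neg at hker
              obtain ⟨v, hvker, hvns⟩ := hker
              refine CE3 G (A ∪ B) C ∅ ?_ α β γ hα hβ hγ hab u₁ v ?_ ?_ (by simp)
                (hnc_of_indep hab (indep_of_not_mem_span hu₁0 hvns |> indep_swap)) hPR
              · intro g hg
                rcases hcov g hg with h | h | h
                · exact Or.inl (Or.inl h)
                · exact Or.inl (Or.inr h)
                · exact Or.inr (Or.inl h)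
              · intro g hg
                rcases hg with h | h
                · exact hUmem _ hu₁U g h
                · exact hVmem _ hu₁V g h
              · intro g hg
                rw [hCsub g hg]
                exact mem_orthSet.1 hvker c rfl
            · -- Branch III.c : some v₂ ∈ V outside span u₁ ; three phases
              push_neg at hV1
              obtain ⟨v₂, hv₂V, hv₂ns⟩ := hV1
              set p : ℂ := (inner ℂ c u₁ : ℂ) with hp
              set q : ℂ := (inner ℂ c v₁ : ℂ) with hq
              set r : ℂ := (inner ℂ c v₂ : ℂ) with hr
              set s : ℂ := -((β - γ) * p + (γ - α) * r) / ((γ - α) * q) with hs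
              set v : Euc d := s • v₁ + v₂ with hvdef
              have hvV : v ∈ V := V.add_mem (V.smul_mem _ hv₁V) hv₂V
              have hvns : v ∉ Submodule.span ℂ {u₁} := by
                intro hmem
                apply hv₂ns
                have : v₂ = v - s • v₁ := by rw [hvdef]; abel
                rw [this]
                exact Submodule.sub_mem _ hmem (Submodule.smul_mem _ _ hdep)
              refine CE3 G A B C hcov α β γ hα hβ hγ hab u₁ v (hUmem _ hu₁U)
                (hVmem _ hvV) ?_
                (hnc_of_indep hab (indep_of_not_mem_span hu₁0 hvns |> indep_swap)) hPR
              intro g hg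
              rw [hCsub g hg, hvdef]
              rw [inner_add_right, inner_smul_right, inner_smul_right,
                inner_add_right, inner_smul_right]
              rw [← hp, ← hq, ← hr, hs]
              field_simp
              ring
          · -- Branch III.b : some u₂ ∈ U outside span u₁ ; three phases
            push_neg at hU1
            obtain ⟨u₂, hu₂U, hu₂ns⟩ := hU1
            set p : ℂ := (inner ℂ c u₁ : ℂ) with hp
            set q : ℂ := (inner ℂ c v₁ : ℂ) with hq
            set r : ℂ := (inner ℂ c u₂ : ℂ) with hr
            set s : ℂ := -((γ - α) * q + (β - γ) * r) / ((β - γ) * p) with hs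
            set u : Euc d := s • u₁ + u₂ with hudef
            have huU : u ∈ U := U.add_mem (U.smul_mem _ hu₁U) hu₂U
            have huns : u ∉ Submodule.span ℂ {u₁} := by
              intro hmem
              apply hu₂ns
              have : u₂ = u - s • u₁ := by rw [hudef]; abel
              rw [this]
              exact Submodule.sub_mem _ hmem
                (Submodule.smul_mem _ _ (Submodule.mem_span_singleton_self u₁))
            have huv₁ : u ∉ Submodule.span ℂ {v₁} := by
              intro hmem
              apply huns
              obtain ⟨r, hr⟩ := Submodule.mem_span_singleton.1 hmem
              rw [← hr, ← hk, smul_smul]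
              exact Submodule.smul_mem _ _ (Submodule.mem_span_singleton_self u₁)
            refine CE3 G A B C hcov α β γ hα hβ hγ hab u v₁ (hUmem _ huU)
              (hVmem _ hv₁V) ?_
              (hnc_of_indep hab (indep_of_not_mem_span hv₁0 huv₁)) hPR
            intro g hg
            rw [hCsub g hg, hudef]
            rw [inner_add_right, inner_smul_right, inner_smul_right,
              inner_add_right, inner_smul_right]
            rw [← hp, ← hq, ← hr, hs]
            field_simp
            ring
        · -- Branch III.a : v₁ ∉ span u₁ ; three phases with u = t • u₁
          set p : ℂ := (inner ℂ c u₁ : ℂ) with hp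
          set q : ℂ := (inner ℂ c v₁ : ℂ) with hq
          set t : ℂ := -((γ - α) * q) / ((β - γ) * p) with ht
          have ht0 : t ≠ 0 := by
            rw [ht]
            apply div_ne_zero
            · simp only [neg_ne_zero]
              exact mul_ne_zero hga' hv₁c
            · exact mul_ne_zero hbg' hu₁c
          have htu0 : t • u₁ ≠ 0 := smul_ne_zero ht0 hu₁0
          have hv₁nst : v₁ ∉ Submodule.span ℂ {t • u₁} := by
            intro hmem
            apply hdep
            obtain ⟨r, hr⟩ := Submodule.mem_span_singleton.1 hmem
            rw [← hr, smul_smul]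
            exact Submodule.smul_mem _ _ (Submodule.mem_span_singleton_self u₁)
          refine CE3 G A B C hcov α β γ hα hβ hγ hab (t • u₁) v₁
            (fun g hg => by rw [inner_smul_right, hUmem _ hu₁U g hg, mul_zero])
            (hVmem _ hv₁V) ?_
            (hnc_of_indep hab (indep_of_not_mem_span htu0 hv₁nst |> indep_swap)) hPR
          intro g hg
          rw [hCsub g hg]
          rw [inner_add_right, inner_smul_right, inner_smul_right, inner_smul_right]
          rw [← hp, ← hq, ht]
          field_simp
          ring


attribute [local instance] Classical.propDecidable

abbrev Euc2 (d : ℕ) := EuclideanSpace ℂ ((Fin d) ⊕ (Fin d))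

lemma exists_avoid {ι : Type*} [Countable ι] (p : ι → Submodule ℂ (Euc d))
    (hp : ∀ i, p i ≠ ⊤) : ∃ x : Euc d, ∀ i, x ∉ p i := by
  by_contra hcon
  push_neg at hcon
  have hcover : (⋃ i, (p i : Set (Euc d))) = Set.univ := by
    ext x
    simp only [Set.mem_iUnion, Set.mem_univ, iff_true, SetLike.mem_coe]
    exact hcon x
  obtain ⟨i, hi⟩ := nonempty_interior_of_iUnion_of_closed
    (fun i => (p i).closed_of_finiteDimensional) hcover
  exact hp i (Submodule.eq_top_of_nonempty_interior' _ hi)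

def pairv (x y : Euc d) : Euc2 d := (WithLp.equiv 2 _).symm (Sum.elim x y)

lemma pairv_inl (x y : Euc d) (i : Fin d) : pairv x y (Sum.inl i) = x i := rfl
lemma pairv_inr (x y : Euc d) (i : Fin d) : pairv x y (Sum.inr i) = y i := rfl

lemma inner_pairv (a b x y : Euc d) :
    (inner ℂ (pairv a b) (pairv x y) : ℂ) = (inner ℂ a x : ℂ) + (inner ℂ b y : ℂ) := by
  simp only [PiLp.inner_apply, RCLike.inner_apply, Fintype.sum_sum_type]
  congr 1

def fstL : Euc2 d →ₗ[ℂ] Euc d where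
  toFun v := WithLp.toLp 2 (fun i => v (Sum.inl i))
  map_add' a b := rfl
  map_smul' c a := rfl

def sndL : Euc2 d →ₗ[ℂ] Euc d where
  toFun v := WithLp.toLp 2 (fun i => v (Sum.inr i))
  map_add' a b := rfl
  map_smul' c a := rfl

lemma fstL_pairv (x y : Euc d) : fstL (pairv x y) = x := rfl
lemma sndL_pairv (x y : Euc d) : sndL (pairv x y) = y := rfl

def iotaL (θ : ℂ) : Euc d →ₗ[ℂ] Euc2 d where
  toFun x := pairv x ((-(starRingEnd ℂ θ)) • x)
  map_add' a b := by
    ext j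
    rcases j with i | i
    · rfl
    · show (-(starRingEnd ℂ θ)) • (a + b) i = _
      simp only [pairv, PiLp.add_apply, WithLp.equiv_symm_apply, WithLp.ofLp_toLp, Sum.elim_inr,
        PiLp.smul_apply, smul_eq_mul]
      ring
  map_smul' c a := by
    ext j
    rcases j with i | i
    · rfl
    · show (-(starRingEnd ℂ θ)) • (c • a) i = _
      simp only [pairv, WithLp.equiv_symm_apply, WithLp.ofLp_toLp, Sum.elim_inr, PiLp.smul_apply,
        smul_eq_mul, RingHom.id_apply]
      ring

lemma iotaL_apply (θ : ℂ) (x : Euc d) : iotaL θ x = pairv x ((-(starRingEnd ℂ θ)) • x) := rfl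

lemma iotaL_inj (θ : ℂ) : Function.Injective (iotaL (d := d) θ) := by
  intro a b hab
  have : ∀ i, a i = b i := fun i => congrFun congr(fstL $hab) i
  ext i
  exact this i

lemma inner_iotaL (θ : ℂ) (g f h : Euc d) :
    (inner ℂ (iotaL θ g) (pairv f h) : ℂ) = (inner ℂ g f : ℂ) - θ * (inner ℂ g h : ℂ) := by
  rw [iotaL_apply, inner_pairv, inner_smul_left]
  simp only [map_neg, RingHomCompTriple.comp_apply, RingHom.id_apply, starRingEnd_self_apply]
  ring


lemma sum_coe_attach {M : Type*} [AddCommMonoid M] (s : Finset ℕ) (f : ℕ → M) :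
    ∑ i : ↥s, f ↑i = ∑ i ∈ s, f i := Finset.sum_coe_sort s f

/-- The core genericity ("properness") lemma. -/
lemma step_proper (hd : 1 ≤ d) (w : ℕ → Euc d) (t : Finset ℕ) (ψ : ℕ → ℂ) (θ : ℂ)
    (hcard : t.card ≤ 2 * d - 1)
    (hIc : (t.filter (fun i => ψ i = θ)).card ≤ d - 1)
    (hindep : ∀ c : ℕ → ℂ, ∑ i ∈ t, c i • iotaL (ψ i) (w i) = 0 → ∀ i ∈ t, c i = 0)
    (hFS : ∀ s : Finset ℕ, s ⊆ t → s.card ≤ d →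
      ∀ c : ℕ → ℂ, ∑ i ∈ s, c i • w i = 0 → ∀ i ∈ s, c i = 0) :
    ∃ x : Euc d, iotaL θ x ∉ Submodule.span ℂ ((fun i => iotaL (ψ i) (w i)) '' (t : Set ℕ)) := by
  by_contra hcon
  push_neg at hcon
  set vv : ℕ → Euc2 d := fun i => iotaL (ψ i) (w i) with hvv
  set I : Finset ℕ := t.filter (fun i => ψ i = θ) with hI
  set J : Finset ℕ := t \ I with hJ
  have hJt : J ⊆ t := Finset.sdiff_subset
  have hIt : I ⊆ t := Finset.filter_subset _ _
  have hJcard : J.card = t.card - I.card := Finset.card_sdiff_of_subset hIt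
  have hJne : ∀ j ∈ J, ψ j ≠ θ := by
    intro j hj
    rw [hJ] at hj
    rcases Finset.mem_sdiff.1 hj with ⟨hjt, hjI⟩
    intro heq
    exact hjI (Finset.mem_filter.2 ⟨hjt, heq⟩)
  set famJ : ↥J → Euc2 d := fun j => vv ↑j with hfamJ
  set famwJ : ↥J → Euc d := fun j => w ↑j with hfamwJ
  set W : Submodule ℂ (Euc2 d) := Submodule.span ℂ (vv '' (t : Set ℕ)) with hW
  set A : Submodule ℂ (Euc2 d) := Submodule.span ℂ (Set.range famJ) with hA
  set Im : Submodule ℂ (Euc2 d) := LinearMap.range (iotaL (d := d) θ) with hIm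
  -- (i) independence of famJ
  have hliJ : LinearIndependent ℂ famJ := by
    rw [Fintype.linearIndependent_iff]
    intro c hc j
    set c' : ℕ → ℂ := fun i => if h : i ∈ J then c ⟨i, h⟩ else 0 with hc'
    have hsum : ∑ i ∈ t, c' i • vv i = 0 := by
      rw [← Finset.sum_subset hJt (by intro i _ hiJ; rw [hc']; simp [hiJ])]
      rw [← sum_coe_attach J (fun i => c' i • vv i), ← hc]
      apply Finset.sum_congr rfl
      intro j _
      congr 1
      rw [hc']
      simp [j.2]
    have := hindep c' hsum j (hJt j.2)
    rw [hc'] at this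
    simpa [j.2] using this
  -- (ii) finrank A = J.card
  have hfrA : finrank ℂ A = J.card := by
    rw [hA, finrank_span_eq_card hliJ, Fintype.card_coe]
  -- (iii) finrank Im = d
  have hfrIm : finrank ℂ Im = d := by
    rw [hIm, LinearMap.finrank_range_of_inj (iotaL_inj θ), finrank_euclideanSpace_fin]
  -- (iv) A ⊔ Im ≤ W and finrank W ≤ t.card
  have hAW : A ≤ W := by
    rw [hA, hW]
    apply Submodule.span_mono
    rintro x ⟨j, rfl⟩
    exact ⟨↑j, hJt j.2, rfl⟩
  have hImW : Im ≤ W := by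
    rw [hIm]
    rintro x ⟨y, rfl⟩
    exact hcon y
  have hfrW : finrank ℂ W ≤ t.card := by
    have h1 : (vv '' (t : Set ℕ)) = ↑(t.image vv) := (Finset.coe_image).symm
    rw [hW, h1]
    exact le_trans (finrank_span_finset_le_card (t.image vv)) (Finset.card_image_le)
  have hfrsup : finrank ℂ ↥(A ⊔ Im) ≤ t.card :=
    le_trans (Submodule.finrank_mono (sup_le hAW hImW)) hfrW
  -- (v) dimension of the intersection
  have hfrinf : J.card + d - t.card ≤ finrank ℂ ↥(A ⊓ Im) := by
    have := Submodule.finrank_sup_add_finrank_inf_eq A Im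
    omega
  -- (vi) the relation space K
  set comb : (↥J → ℂ) →ₗ[ℂ] Euc d := Fintype.linearCombination ℂ famwJ with hcomb
  set K : Submodule ℂ (↥J → ℂ) := LinearMap.ker comb with hK
  have hranks : finrank ℂ ↥(LinearMap.range comb) + finrank ℂ K = J.card := by
    rw [hK, LinearMap.finrank_range_add_finrank_ker comb]
    simp [finrank_fintype_fun_eq_card, Fintype.card_coe]
  -- (vii) injection from A ⊓ Im into K
  have hinj : finrank ℂ ↥(A ⊓ Im) ≤ finrank ℂ K := by
    set b : Basis ↥J ℂ ↥A := Basis.span hliJ with hb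
    set incl : ↥(A ⊓ Im) →ₗ[ℂ] ↥A := Submodule.inclusion inf_le_left with hincl
    set Lfun : ↥(A ⊓ Im) → (↥J → ℂ) := fun z => fun j =>
      (starRingEnd ℂ (ψ ↑j) - starRingEnd ℂ θ) * (b.repr (incl z) j) with hLfun
    have hLlin1 : ∀ z₁ z₂, Lfun (z₁ + z₂) = Lfun z₁ + Lfun z₂ := by
      intro z₁ z₂
      funext j
      rw [hLfun]
      simp only [map_add, Finsupp.add_apply, Pi.add_apply]
      ring
    have hLlin2 : ∀ (c : ℂ) z, Lfun (c • z) = c • Lfun z := by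
      intro c z
      funext j
      rw [hLfun]
      simp only [_root_.map_smul, Finsupp.smul_apply, Pi.smul_apply, smul_eq_mul]
      ring
    -- the decomposition of z ∈ A ⊓ Im
    have hdecomp : ∀ z : ↥(A ⊓ Im),
        (z : Euc2 d) = ∑ j : ↥J, (b.repr (incl z) j) • famJ j := by
      intro z
      have h1 := b.sum_repr (incl z)
      have h2 := congrArg (Submodule.subtype A) h1
      rw [map_sum] at h2
      have h3 : ∀ j : ↥J, (A.subtype) ((b.repr (incl z)) j • b j)
          = (b.repr (incl z) j) • famJ j := by
        intro j
        rw [_root_.map_smul]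
        congr 1
        show ((b j : ↥A) : Euc2 d) = famJ j
        rw [hb, Basis.span_apply]
      rw [Finset.sum_congr rfl (fun j _ => h3 j)] at h2
      have h4 : A.subtype (incl z) = (z : Euc2 d) := rfl
      rw [h4] at h2
      exact h2.symm
    have hinK : ∀ z : ↥(A ⊓ Im), Lfun z ∈ K := by
      intro z
      obtain ⟨x, hx⟩ : ∃ x, iotaL θ x = (z : Euc2 d) := by
        have := z.2
        rw [Submodule.mem_inf] at this
        exact this.2
      have hfst : x = ∑ j : ↥J, (b.repr (incl z) j) • famwJ j := by
        have := congrArg fstL (hdecomp z)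
        rw [← hx, map_sum] at this
        simpa [iotaL_apply, fstL_pairv, hfamJ, hvv, hfamwJ] using this
      have hsnd : (-(starRingEnd ℂ θ)) • x
          = ∑ j : ↥J, (b.repr (incl z) j) • ((-(starRingEnd ℂ (ψ ↑j))) • famwJ j) := by
        have := congrArg sndL (hdecomp z)
        rw [← hx, map_sum] at this
        simpa [iotaL_apply, sndL_pairv, hfamJ, hvv, hfamwJ] using this
      rw [hK, LinearMap.mem_ker, hcomb, Fintype.linearCombination_apply]
      have expand : ∀ j : ↥J, Lfun z j • famwJ j
          = (starRingEnd ℂ (ψ ↑j) * (b.repr (incl z) j)) • famwJ j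
            - (starRingEnd ℂ θ * (b.repr (incl z) j)) • famwJ j := by
        intro j
        rw [hLfun, ← sub_smul]
        congr 1
        ring
      rw [Finset.sum_congr rfl (fun j _ => expand j), Finset.sum_sub_distrib]
      have e1 : ∑ j : ↥J, (starRingEnd ℂ (ψ ↑j) * (b.repr (incl z) j)) • famwJ j
          = (starRingEnd ℂ θ) • x := by
        have h5 : ∑ j : ↥J, (b.repr (incl z) j) • ((-(starRingEnd ℂ (ψ ↑j))) • famwJ j)
            = -∑ j : ↥J, (starRingEnd ℂ (ψ ↑j) * (b.repr (incl z) j)) • famwJ j := by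
          rw [← Finset.sum_neg_distrib]
          apply Finset.sum_congr rfl
          intro j _
          rw [smul_smul, ← neg_smul]
          congr 1
          ring
        rw [h5] at hsnd
        have h6 : (-(starRingEnd ℂ θ)) • x = -((starRingEnd ℂ θ) • x) := by rw [neg_smul]
        rw [h6] at hsnd
        exact (neg_injective hsnd).symm
      have e2 : ∑ j : ↥J, (starRingEnd ℂ θ * (b.repr (incl z) j)) • famwJ j
          = (starRingEnd ℂ θ) • x := by
        rw [hfst, Finset.smul_sum]
        apply Finset.sum_congr rfl
        intro j _
        rw [smul_smul]
      rw [e1, e2, sub_self]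
    set L : ↥(A ⊓ Im) →ₗ[ℂ] ↥K :=
      { toFun := fun z => ⟨Lfun z, hinK z⟩
        map_add' := fun z₁ z₂ => by ext j; exact congrFun (hLlin1 z₁ z₂) j
        map_smul' := fun c z => by ext j; exact congrFun (hLlin2 c z) j } with hL
    have hLinj : Function.Injective L := by
      intro z₁ z₂ hz
      have h0 : Lfun (z₁ - z₂) = 0 := by
        have : Lfun z₁ = Lfun z₂ := congrArg (fun y : ↥K => (y : ↥J → ℂ)) hz
        rw [sub_eq_add_neg, hLlin1, ← neg_one_smul ℂ z₂, hLlin2, this]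
        funext j
        simp
      have hrepr : b.repr (incl (z₁ - z₂)) = 0 := by
        ext j
        have := congrFun h0 j
        rw [hLfun] at this
        have hne : starRingEnd ℂ (ψ ↑j) - starRingEnd ℂ θ ≠ 0 := by
          rw [sub_ne_zero]
          intro heq
          exact hJne ↑j j.2 ((starRingEnd ℂ).injective heq)
        simpa [hne] using this
      have : incl (z₁ - z₂) = 0 := by
        have := congrArg b.repr.symm hrepr
        rwa [LinearEquiv.symm_apply_apply, map_zero] at this
      have hsub : z₁ - z₂ = 0 := by
        have h5 := congrArg (Submodule.subtype _) this
        rw [map_zero] at h5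
        exact Subtype.ext (by simpa [hincl] using h5)
      rw [sub_eq_zero] at hsub
      exact hsub
    exact LinearMap.finrank_le_finrank_of_injective hLinj
  -- (viii) conclusion : the rank of {w j : j ∈ J} is too small
  have hrank : finrank ℂ ↥(LinearMap.range comb) ≤ t.card - d := by omega
  set n0 : ℕ := min J.card d with hn0
  obtain ⟨s, hsJ, hscard⟩ := Finset.exists_subset_card_eq (min_le_left J.card d)
  have hfams : LinearIndependent ℂ (fun i : ↥s => w ↑i) := by
    rw [Fintype.linearIndependent_iff]
    intro c hc i
    set c' : ℕ → ℂ := fun i => if h : i ∈ s then c ⟨i, h⟩ else 0 with hc'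
    have hsum : ∑ i ∈ s, c' i • w i = 0 := by
      rw [← sum_coe_attach s (fun i => c' i • w i), ← hc]
      apply Finset.sum_congr rfl
      intro j _
      congr 1
      rw [hc']
      simp [j.2]
    have := hFS s (hsJ.trans hJt) (by omega) c' hsum ↑i i.2
    rw [hc'] at this
    simpa [i.2] using this
  have hfr_s : finrank ℂ ↥(Submodule.span ℂ (Set.range (fun i : ↥s => w ↑i))) = n0 := by
    rw [finrank_span_eq_card hfams, Fintype.card_coe, hscard]
  have hle : Submodule.span ℂ (Set.range (fun i : ↥s => w ↑i)) ≤ LinearMap.range comb := by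
    rw [hcomb, Fintype.range_linearCombination]
    apply Submodule.span_mono
    rintro x ⟨i, rfl⟩
    exact ⟨⟨↑i, hsJ i.2⟩, rfl⟩
  have := Submodule.finrank_mono hle
  rw [hfr_s] at this
  omega



lemma euc_nontrivial (hd : 1 ≤ d) : Nontrivial (Euc d) := by
  refine ⟨EuclideanSpace.single ⟨0, hd⟩ 1, 0, ?_⟩
  intro h
  have := congrArg (fun v : Euc d => v ⟨0, hd⟩) h
  rw [EuclideanSpace.single_apply] at this
  simp at this

/-- the conclusion of `exists_generic` -/
def GenSeq (d : ℕ) (Θ : Set ℂ) (w : ℕ → Euc d) : Prop :=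
  ∀ t : Finset ℕ, t.card ≤ 2 * d →
    ∀ ψ : ℕ → ℂ, (∀ i ∈ t, ψ i ∈ Θ) →
      (∀ θ : ℂ, (t.filter (fun i => ψ i = θ)).card ≤ d) →
      ∀ c : ℕ → ℂ, ∑ i ∈ t, c i • iotaL (ψ i) (w i) = 0 → ∀ i ∈ t, c i = 0


/-- the inductive invariant -/
def INV (Θ : Set ℂ) (n : ℕ) (w : ℕ → Euc d) : Prop :=
  ∀ t : Finset ℕ, (∀ i ∈ t, i < n) → t.card ≤ 2 * d →
    ∀ ψ : ℕ → ℂ, (∀ i ∈ t, ψ i ∈ Θ) →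
      (∀ θ : ℂ, (t.filter (fun i => ψ i = θ)).card ≤ d) →
      ∀ c : ℕ → ℂ, ∑ i ∈ t, c i • iotaL (ψ i) (w i) = 0 → ∀ i ∈ t, c i = 0

/-- reconstruct a phase function from data on a finset -/
def recψ (t : Finset ℕ) (σ : ↥t → ↥Θ) : ℕ → ℂ := fun i =>
  if h : i ∈ t then (σ ⟨i, h⟩ : ℂ) else 0

lemma recψ_eq {t : Finset ℕ} {σ : ↥t → ↥Θ} {i : ℕ} (hi : i ∈ t) :
    recψ t σ i = (σ ⟨i, hi⟩ : ℂ) := by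
  rw [recψ, dif_pos hi]

lemma INV_step (hd : 1 ≤ d) (hΘc : Θ.Countable) (hΘne : Θ.Nonempty)
    (n : ℕ) (w : ℕ → Euc d) (hw : INV Θ n w) :
    ∃ x : Euc d, INV Θ (n + 1) (Function.update w n x) := by
  haveI := euc_nontrivial (d := d) hd
  haveI : Countable ↥Θ := hΘc.to_subtype
  obtain ⟨θ₀, hθ₀⟩ := hΘne
  -- countable family of bad subspaces
  set IdxT := Σ t : Finset ℕ, ((↥t → ↥Θ) × ↥Θ) with hIdxT
  set p : IdxT → Submodule ℂ (Euc d) := fun idx =>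
    if ((∀ i ∈ idx.1, i < n) ∧ idx.1.card ≤ 2 * d - 1 ∧
        (∀ θ' : ℂ, (idx.1.filter (fun i => recψ idx.1 idx.2.1 i = θ')).card ≤ d) ∧
        (idx.1.filter (fun i => recψ idx.1 idx.2.1 i = (idx.2.2 : ℂ))).card ≤ d - 1)
    then Submodule.comap (iotaL (idx.2.2 : ℂ))
      (Submodule.span ℂ ((fun i => iotaL (recψ idx.1 idx.2.1 i) (w i)) '' (idx.1 : Set ℕ)))
    else ⊥ with hp
  have hproper : ∀ idx, p idx ≠ ⊤ := by
    intro idx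
    rw [hp]
    dsimp only
    split_ifs with hside
    · obtain ⟨hlt, hcard, hfib, hfibθ⟩ := hside
      set ψ := recψ idx.1 idx.2.1 with hψ
      have hψΘ : ∀ i ∈ idx.1, ψ i ∈ Θ := by
        intro i hi
        rw [hψ, recψ_eq hi]
        exact (idx.2.1 ⟨i, hi⟩).2
      have hindep : ∀ c : ℕ → ℂ, ∑ i ∈ idx.1, c i • iotaL (ψ i) (w i) = 0 →
          ∀ i ∈ idx.1, c i = 0 :=
        hw idx.1 hlt (by omega) ψ hψΘ hfib
      have hFS : ∀ s : Finset ℕ, s ⊆ idx.1 → s.card ≤ d →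
          ∀ c : ℕ → ℂ, ∑ i ∈ s, c i • w i = 0 → ∀ i ∈ s, c i = 0 := by
        intro s hs hscard c hc
        have hsum : ∑ i ∈ s, c i • iotaL θ₀ (w i) = 0 := by
          have := congrArg (iotaL (d := d) θ₀) hc
          rw [map_sum, map_zero] at this
          rw [← this]
          apply Finset.sum_congr rfl
          intro i _
          rw [_root_.map_smul]
        refine hw s (fun i hi => hlt i (hs hi)) (by omega) (fun _ => θ₀)
          (fun i _ => hθ₀) ?_ c hsum
        intro θ'
        by_cases hθ' : θ₀ = θ'
        · subst hθ'
          simpa using hscard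
        · rw [Finset.filter_false_of_mem (fun i _ => hθ')]
          simp [hd]
      obtain ⟨x, hx⟩ := step_proper hd w idx.1 ψ (idx.2.2 : ℂ) hcard hfibθ hindep hFS
      intro htop
      apply hx
      have : x ∈ Submodule.comap (iotaL (idx.2.2 : ℂ))
          (Submodule.span ℂ ((fun i => iotaL (ψ i) (w i)) '' (idx.1 : Set ℕ))) := by
        rw [htop]; trivial
      exact this
    · exact bot_ne_top
  obtain ⟨x, hxav⟩ := exists_avoid p hproper
  refine ⟨x, ?_⟩
  intro t hlt hcard ψ hψΘ hfib c hsum i hit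
  set w' := Function.update w n x with hw'
  by_cases hn : n ∈ t
  · set t' := t.erase n with ht'
    have hlt' : ∀ j ∈ t', j < n := by
      intro j hj
      rcases Finset.mem_erase.1 hj with ⟨hjn, hjt⟩
      have := hlt j hjt
      omega
    have hwt' : ∀ j ∈ t', w' j = w j := by
      intro j hj
      rw [hw', Function.update_of_ne (Finset.mem_erase.1 hj).1]
    have hsplit : c n • iotaL (ψ n) x + ∑ j ∈ t', c j • iotaL (ψ j) (w j) = 0 := by
      rw [← hsum, ← Finset.add_sum_erase t _ hn]
      congr 1
      · rw [hw', Function.update_self]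
      · apply Finset.sum_congr rfl
        intro j hj
        rw [hwt' j hj]
    have hcn : c n = 0 := by
      by_contra hcn0
      -- x lies in one of the avoided subspaces
      set σ : ↥t' → ↥Θ := fun j => ⟨ψ ↑j, hψΘ ↑j (Finset.erase_subset _ _ j.2)⟩ with hσ
      set idx : IdxT := ⟨t', σ, ⟨ψ n, hψΘ n hn⟩⟩ with hidx
      have hrec : ∀ j ∈ t', recψ t' σ j = ψ j := by
        intro j hj
        rw [recψ_eq hj]
      have hfilter : ∀ θ' : ℂ, t'.filter (fun i => recψ t' σ i = θ')
          = (t.filter (fun i => ψ i = θ')).erase n := by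
        intro θ'
        ext j
        simp only [Finset.mem_filter, Finset.mem_erase, ht']
        constructor
        · rintro ⟨⟨hjn, hjt⟩, hrecj⟩
          refine ⟨hjn, hjt, ?_⟩
          rw [← hrec j (Finset.mem_erase.2 ⟨hjn, hjt⟩)]
          exact hrecj
        · rintro ⟨hjn, hjt, hψj⟩
          refine ⟨⟨hjn, hjt⟩, ?_⟩
          rw [hrec j (Finset.mem_erase.2 ⟨hjn, hjt⟩)]
          exact hψj
      have hside : (∀ i ∈ t', i < n) ∧ t'.card ≤ 2 * d - 1 ∧
          (∀ θ' : ℂ, (t'.filter (fun i => recψ t' σ i = θ')).card ≤ d) ∧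
          (t'.filter (fun i => recψ t' σ i = ψ n)).card ≤ d - 1 := by
        refine ⟨hlt', ?_, ?_, ?_⟩
        · rw [ht', Finset.card_erase_of_mem hn]
          omega
        · intro θ'
          rw [hfilter θ']
          exact le_trans (Finset.card_le_card (Finset.erase_subset _ _)) (hfib θ')
        · rw [hfilter (ψ n)]
          have hmem : n ∈ t.filter (fun i => ψ i = ψ n) :=
            Finset.mem_filter.2 ⟨hn, rfl⟩
          rw [Finset.card_erase_of_mem hmem]
          have := hfib (ψ n)
          omega
      have hximg : iotaL (ψ n) x ∈
          Submodule.span ℂ ((fun i => iotaL (ψ i) (w i)) '' (t' : Set ℕ)) := by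
        have hrearr : iotaL (ψ n) x = ∑ j ∈ t', (-(c n)⁻¹ * c j) • iotaL (ψ j) (w j) := by
          have h7 : c n • iotaL (ψ n) x = -∑ j ∈ t', c j • iotaL (ψ j) (w j) := by
            rw [eq_neg_iff_add_eq_zero]
            exact hsplit
          have := congrArg (fun y => (c n)⁻¹ • y) h7
          simp only [smul_smul, inv_mul_cancel₀ hcn0, one_smul, smul_neg] at this
          rw [this, Finset.smul_sum, ← Finset.sum_neg_distrib]
          apply Finset.sum_congr rfl
          intro j _
          rw [smul_smul]
          rw [← neg_smul]
          congr 1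
          ring
        rw [hrearr]
        apply Submodule.sum_mem
        intro j hj
        apply Submodule.smul_mem
        apply Submodule.subset_span
        exact ⟨j, hj, rfl⟩
      have hxp : x ∈ p idx := by
        rw [hp]
        show x ∈ (if _ then _ else _ : Submodule ℂ (Euc d))
        rw [if_pos hside]
        rw [Submodule.mem_comap]
        have himgeq : ((fun i => iotaL (recψ t' σ i) (w i)) '' (t' : Set ℕ))
            = ((fun i => iotaL (ψ i) (w i)) '' (t' : Set ℕ)) :=
          Set.image_congr (fun a ha => by rw [hrec a ha])
        rw [himgeq]
        exact hximg
      exact hxav idx hxp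
    -- now conclude
    have hsum' : ∑ j ∈ t', c j • iotaL (ψ j) (w j) = 0 := by
      rw [hcn, zero_smul, zero_add] at hsplit
      exact hsplit
    have hall' := hw t' hlt' (le_trans (Finset.card_le_card (Finset.erase_subset _ _)) hcard)
      ψ (fun j hj => hψΘ j (Finset.erase_subset _ _ hj))
      (fun θ' => le_trans (Finset.card_le_card (Finset.filter_subset_filter _ (Finset.erase_subset _ _))) (hfib θ'))
      c hsum'
    by_cases hin : i = n
    · rw [hin]; exact hcn
    · exact hall' i (Finset.mem_erase.2 ⟨hin, hit⟩)
  · -- n ∉ t : reduce to hw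
    have hlt' : ∀ j ∈ t, j < n := by
      intro j hj
      have := hlt j hj
      rcases Nat.lt_succ_iff_lt_or_eq.1 this with h | h
      · exact h
      · exact absurd (h ▸ hj) hn
    have hsum' : ∑ j ∈ t, c j • iotaL (ψ j) (w j) = 0 := by
      rw [← hsum]
      apply Finset.sum_congr rfl
      intro j hj
      rw [hw', Function.update_of_ne (by rintro rfl; exact hn hj)]
    exact hw t hlt' hcard ψ hψΘ hfib c hsum' i hit

/-- existence of a generic sequence -/
lemma exists_generic (hd : 1 ≤ d) (hΘc : Θ.Countable) (hΘne : Θ.Nonempty) :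
    ∃ w : ℕ → Euc d, GenSeq d Θ w := by
  have base : INV Θ 0 (fun _ => (0 : Euc d)) := by
    intro t hlt _ _ _ _ _ _ i hit
    exact absurd (hlt i hit) (by omega)
  set g : ∀ n : ℕ, {v : ℕ → Euc d // INV Θ n v} := fun n => Nat.rec
    ⟨fun _ => 0, base⟩
    (fun m ih => ⟨Function.update ih.1 m (Classical.choose (INV_step hd hΘc hΘne m ih.1 ih.2)),
      Classical.choose_spec (INV_step hd hΘc hΘne m ih.1 ih.2)⟩) n
    with hg
  have hsucc : ∀ m : ℕ, ∀ i : ℕ, i ≠ m → (g (m+1)).1 i = (g m).1 i := by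
    intro m i him
    show Function.update (g m).1 m _ i = (g m).1 i
    rw [Function.update_of_ne him]
  have hagree : ∀ n m : ℕ, n ≤ m → ∀ i, i < n → (g m).1 i = (g n).1 i := by
    intro n m hnm
    induction m, hnm using Nat.le_induction with
    | base => intro i _; rfl
    | succ m hnm ih =>
      intro i hi
      rw [← ih i hi]
      exact hsucc m i (by omega)
  set w : ℕ → Euc d := fun i => (g (i+1)).1 i with hwdef
  have hwg : ∀ n i, i < n → (g n).1 i = w i := by
    intro n i hi
    rw [hwdef]
    exact hagree (i+1) n (by omega) i (by omega)
  refine ⟨w, ?_⟩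
  intro t hcard ψ hψΘ hfib c hsum
  set n : ℕ := (t.sup id) + 1 with hn
  have hlt : ∀ i ∈ t, i < n := by
    intro i hi
    have h9 := Finset.le_sup (f := id) hi
    simp only [id] at h9
    omega
  have hsum' : ∑ i ∈ t, c i • iotaL (ψ i) ((g n).1 i) = 0 := by
    rw [← hsum]
    apply Finset.sum_congr rfl
    intro i hi
    rw [hwg n i (hlt i hi)]
  exact (g n).2 t hlt hcard ψ hψΘ hfib c hsum'

/-- from `d` generic vectors : orthogonality to all of them forces `0`. -/
lemma generic_span (hd : 1 ≤ d) {w : ℕ → Euc d} (hgen : GenSeq d Θ w)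
    {θ₀ : ℂ} (hθ₀ : θ₀ ∈ Θ) (s : Finset ℕ) (hcard : s.card = d)
    (z : Euc d) (hz : ∀ i ∈ s, (inner ℂ (w i) z : ℂ) = 0) : z = 0 := by
  have hli : LinearIndependent ℂ (fun i : ↥s => w ↑i) := by
    rw [Fintype.linearIndependent_iff]
    intro c hc i
    set c' : ℕ → ℂ := fun i => if h : i ∈ s then c ⟨i, h⟩ else 0 with hc'
    have hsum0 : ∑ i ∈ s, c' i • w i = 0 := by
      rw [← sum_coe_attach s (fun i => c' i • w i), ← hc]
      apply Finset.sum_congr rfl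
      intro j _
      congr 1
      rw [hc']
      simp [j.2]
    have hsum : ∑ i ∈ s, c' i • iotaL θ₀ (w i) = 0 := by
      have h5 := congrArg (iotaL (d := d) θ₀) hsum0
      rw [map_sum, map_zero] at h5
      rw [← h5]
      exact Finset.sum_congr rfl (fun i _ => by rw [_root_.map_smul])
    have hfib : ∀ θ' : ℂ, (s.filter (fun i => (fun _ => θ₀) i = θ')).card ≤ d := by
      intro θ'
      by_cases hθ' : θ₀ = θ'
      · subst hθ'; simpa [hcard] using Finset.card_filter_le s _
      · rw [Finset.filter_false_of_mem (fun i _ => hθ')]; simp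
    have := hgen s (by omega) (fun _ => θ₀) (fun i _ => hθ₀) hfib c' hsum ↑i i.2
    rw [hc'] at this
    simpa [i.2] using this
  have hspan : Submodule.span ℂ (Set.range (fun i : ↥s => w ↑i)) = ⊤ := by
    apply Submodule.eq_top_of_finrank_eq
    rw [finrank_span_eq_card hli, Fintype.card_coe, hcard, finrank_euclideanSpace_fin]
  have hzmem : z ∈ Submodule.span ℂ (Set.range (fun i : ↥s => w ↑i)) := by
    rw [hspan]; trivial
  obtain ⟨a, ha⟩ := (mem_span_range_iff_exists_fun ℂ).1 hzmem
  have : (inner ℂ z z : ℂ) = 0 := by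
    nth_rewrite 1 [← ha]
    rw [sum_inner]
    rw [Finset.sum_eq_zero]
    intro i _
    rw [inner_smul_left, hz ↑i i.2, mul_zero]
  exact inner_self_eq_zero.1 this

lemma generic_conclude (hd : 1 ≤ d) {w : ℕ → Euc d} (hgen : GenSeq d Θ w)
    {θ₀ : ℂ} (hθ₀ : θ₀ ∈ Θ) (s : Finset ℕ) (hcard : s.card = d) (θ : ℂ) (f h : Euc d)
    (hsol : ∀ i ∈ s, (inner ℂ (w i) f : ℂ) = θ * (inner ℂ (w i) h : ℂ)) : f = θ • h := by
  have hz : f - θ • h = 0 := by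
    apply generic_span hd hgen hθ₀ s hcard
    intro i hi
    rw [inner_sub_right, inner_smul_right, hsol i hi, sub_self]
  rw [sub_eq_zero] at hz
  exact hz

/-- `2d` generic vectors do Θ-PR whenever Θ is countable and nonempty. -/
lemma UB3 (hd : 1 ≤ d) (hΘc : Θ.Countable) (hΘne : Θ.Nonempty) :
    ∃ G : Set (Euc d), G.Finite ∧ G.ncard ≤ 2 * d ∧ DoesPR G Θ := by
  obtain ⟨w, hgen⟩ := exists_generic hd hΘc hΘne
  obtain ⟨θ₀, hθ₀⟩ := hΘne
  set t : Finset ℕ := Finset.range (2 * d) with ht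
  refine ⟨↑(t.image w), (t.image w).finite_toSet, ?_, ?_⟩
  · rw [Set.ncard_coe_finset]
    exact le_trans Finset.card_image_le (by simp [ht])
  intro f h hyp
  have hchoice : ∀ i : ℕ, ∃ θ : ℂ, i ∈ t →
      (θ ∈ Θ ∧ (inner ℂ (w i) f : ℂ) = θ * (inner ℂ (w i) h : ℂ)) := by
    intro i
    by_cases hi : i ∈ t
    · obtain ⟨θ, hθ, he⟩ := hyp (w i) (by
        rw [Finset.coe_image]
        exact ⟨i, hi, rfl⟩)
      exact ⟨θ, fun _ => ⟨hθ, he⟩⟩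
    · exact ⟨θ₀, fun hh => absurd hh hi⟩
  choose φ hφ using hchoice
  by_cases hbig : ∃ θ : ℂ, d ≤ (t.filter (fun i => φ i = θ)).card
  · obtain ⟨θ, hθd⟩ := hbig
    obtain ⟨s, hsub, hscard⟩ := Finset.exists_subset_card_eq hθd
    have hsne : s.Nonempty := Finset.card_pos.1 (by omega)
    obtain ⟨i₀, hi₀⟩ := hsne
    have hi₀f := Finset.mem_filter.1 (hsub hi₀)
    have hθΘ : θ ∈ Θ := by
      rw [← hi₀f.2]
      exact (hφ i₀ hi₀f.1).1
    refine ⟨θ, hθΘ, ?_⟩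
    apply generic_conclude hd hgen hθ₀ s hscard
    intro i hi
    have hif := Finset.mem_filter.1 (hsub hi)
    have := (hφ i hif.1).2
    rw [hif.2] at this
    exact this
  · push_neg at hbig
    have hfib : ∀ θ : ℂ, (t.filter (fun i => φ i = θ)).card ≤ d :=
      fun θ => le_of_lt (hbig θ)
    have hsum : ∑ i ∈ t, (1 : ℂ) • iotaL (φ i) (w i) = 0 → False := by
      intro hs
      have := hgen t (by simp [ht]) φ (fun i hi => (hφ i hi).1) hfib 1 hs 0
        (by simp [ht, hd]; omega)
      simp at this
    have hli : LinearIndependent ℂ (fun i : ↥t => iotaL (φ i) (w ↑i)) := by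
      rw [Fintype.linearIndependent_iff]
      intro c hc i
      set c' : ℕ → ℂ := fun i => if h : i ∈ t then c ⟨i, h⟩ else 0 with hc'
      have hsum' : ∑ i ∈ t, c' i • iotaL (φ i) (w i) = 0 := by
        rw [← sum_coe_attach t (fun i => c' i • iotaL (φ i) (w i)), ← hc]
        apply Finset.sum_congr rfl
        intro j _
        congr 1
        rw [hc']
        simp [j.2]
      have := hgen t (by simp [ht]) φ (fun i hi => (hφ i hi).1) hfib c' hsum' ↑i i.2
      rw [hc'] at this
      simpa [i.2] using this
    have hspan : Submodule.span ℂ (Set.range (fun i : ↥t => iotaL (φ i) (w ↑i))) = ⊤ := by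
      apply Submodule.eq_top_of_finrank_eq
      rw [finrank_span_eq_card hli, Fintype.card_coe]
      have : finrank ℂ (Euc2 d) = 2 * d := by
        rw [finrank_euclideanSpace]
        simp [ht]
        ring
      rw [this]
      simp [ht]
    have hpz : pairv f h = (0 : Euc2 d) := by
      have hmem : pairv f h ∈ Submodule.span ℂ
          (Set.range (fun i : ↥t => iotaL (φ i) (w ↑i))) := by rw [hspan]; trivial
      obtain ⟨a, ha⟩ := (mem_span_range_iff_exists_fun ℂ).1 hmem
      have : (inner ℂ (pairv f h) (pairv f h) : ℂ) = 0 := by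
        nth_rewrite 1 [← ha]
        rw [sum_inner]
        apply Finset.sum_eq_zero
        intro i _
        rw [inner_smul_left, inner_iotaL, (hφ ↑i i.2).2, sub_self, mul_zero]
      exact inner_self_eq_zero.1 this
    have hf0 : f = 0 := by rw [← fstL_pairv f h, hpz, map_zero]
    have hh0 : h = 0 := by rw [← sndL_pairv f h, hpz, map_zero]
    exact ⟨θ₀, hθ₀, by rw [hf0, hh0, smul_zero]⟩

/-- `2d - 1` generic vectors do Θ-PR when Θ has two elements. -/
lemma UB2 (hd : 2 ≤ d) (hΘc : Θ.Countable) (α β : ℂ) (hab : α ≠ β) (hT : Θ = {α, β}) :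
    ∃ G : Set (Euc d), G.Finite ∧ G.ncard ≤ 2 * d - 1 ∧ DoesPR G Θ := by
  have hd1 : 1 ≤ d := by omega
  have hΘne : Θ.Nonempty := by rw [hT]; exact ⟨α, by simp⟩
  have hαΘ : α ∈ Θ := by rw [hT]; simp
  have hβΘ : β ∈ Θ := by rw [hT]; simp
  obtain ⟨w, hgen⟩ := exists_generic hd1 hΘc hΘne
  set t : Finset ℕ := Finset.range (2 * d - 1) with ht
  refine ⟨↑(t.image w), (t.image w).finite_toSet, ?_, ?_⟩
  · rw [Set.ncard_coe_finset]
    exact le_trans Finset.card_image_le (by simp [ht])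
  intro f h hyp
  set P : Finset ℕ := t.filter (fun i => (inner ℂ (w i) f : ℂ) = α * (inner ℂ (w i) h : ℂ)) with hP
  set Q : Finset ℕ := t.filter (fun i => (inner ℂ (w i) f : ℂ) = β * (inner ℂ (w i) h : ℂ)) with hQ
  have hcover : t ⊆ P ∪ Q := by
    intro i hi
    obtain ⟨θ, hθ, he⟩ := hyp (w i) (by rw [Finset.coe_image]; exact ⟨i, hi, rfl⟩)
    rw [hT] at hθ
    rcases hθ with rfl | rfl
    · exact Finset.mem_union_left _ (Finset.mem_filter.2 ⟨hi, he⟩)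
    · exact Finset.mem_union_right _ (Finset.mem_filter.2 ⟨hi, he⟩)
  have hcards : 2 * d - 1 ≤ P.card + Q.card := by
    have h1 : t.card ≤ (P ∪ Q).card := Finset.card_le_card hcover
    have h2 := Finset.card_union_le P Q
    have h3 : t.card = 2 * d - 1 := by simp [ht]
    omega
  have hbig : d ≤ P.card ∨ d ≤ Q.card := by omega
  rcases hbig with hbP | hbQ
  · obtain ⟨s, hsub, hscard⟩ := Finset.exists_subset_card_eq hbP
    refine ⟨α, hαΘ, ?_⟩
    apply generic_conclude hd1 hgen hαΘ s hscard
    intro i hi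
    exact (Finset.mem_filter.1 (hsub hi)).2
  · obtain ⟨s, hsub, hscard⟩ := Finset.exists_subset_card_eq hbQ
    refine ⟨β, hβΘ, ?_⟩
    apply generic_conclude hd1 hgen hαΘ s hscard
    intro i hi
    exact (Finset.mem_filter.1 (hsub hi)).2

/-- an orthonormal basis does Θ-PR when Θ is a singleton. -/
lemma UB1 (hd : 1 ≤ d) (θ₀ : ℂ) (hT : Θ = {θ₀}) :
    ∃ G : Set (Euc d), G.Finite ∧ G.ncard ≤ d ∧ DoesPR G Θ := by
  set t : Finset (Euc d) :=
    Finset.image (fun i => EuclideanSpace.single i (1 : ℂ)) Finset.univ with htdef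
  refine ⟨↑t, t.finite_toSet, ?_, ?_⟩
  · rw [Set.ncard_coe_finset]
    exact le_trans Finset.card_image_le (by simp)
  intro f h hyp
  refine ⟨θ₀, by rw [hT]; rfl, ?_⟩
  ext i
  have hmem : EuclideanSpace.single i (1 : ℂ) ∈ (t : Set (Euc d)) := by
    rw [htdef, Finset.coe_image]
    exact ⟨i, by simp, rfl⟩
  obtain ⟨θ, hθ, he⟩ := hyp _ hmem
  rw [hT] at hθ
  rcases hθ with rfl
  rw [EuclideanSpace.inner_single_left, EuclideanSpace.inner_single_left] at he
  simpa using he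

end PRAux

theorem stmt9 (d : ℕ) (hd : 2 ≤ d)
    (Θ : Set ℂ) (hΘ : Θ ⊆ unitCircle) (hcnt : Θ.Countable) (hne : Θ.Nonempty) :
    minPR d Θ =
      if Θ.ncard = 1 then d else if Θ.ncard = 2 then 2 * d - 1 else 2 * d := by
  classical
  have hd1 : 1 ≤ d := by omega
  rw [minPR]
  set S : Set ℕ := {m : ℕ | ∃ G : Set (EuclideanSpace ℂ (Fin d)),
    G.Finite ∧ G.ncard = m ∧ DoesPR G Θ} with hS
  by_cases h1 : Θ.ncard = 1
  · rw [if_pos h1]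
    obtain ⟨θ₀, hT⟩ := Set.ncard_eq_one.1 h1
    obtain ⟨G, hGf, hGc, hGPR⟩ := PRAux.UB1 (Θ := Θ) hd1 θ₀ hT
    have hmem : G.ncard ∈ S := ⟨G, hGf, rfl, hGPR⟩
    have hup : sInf S ≤ d := le_trans (Nat.sInf_le hmem) hGc
    obtain ⟨G₀, hG₀f, hG₀c, hG₀PR⟩ := Nat.sInf_mem ⟨_, hmem⟩
    have hlow : d ≤ sInf S := by
      by_contra hl
      push_neg at hl
      exact PRAux.LB1 hne G₀ hG₀f (by omega) hG₀PR
    omega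
  · rw [if_neg h1]
    by_cases h2 : Θ.ncard = 2
    · rw [if_pos h2]
      obtain ⟨α, β, hab, hT⟩ := Set.ncard_eq_two.1 h2
      obtain ⟨G, hGf, hGc, hGPR⟩ := PRAux.UB2 hd hcnt α β hab hT
      have hmem : G.ncard ∈ S := ⟨G, hGf, rfl, hGPR⟩
      have hup : sInf S ≤ 2 * d - 1 := le_trans (Nat.sInf_le hmem) hGc
      obtain ⟨G₀, hG₀f, hG₀c, hG₀PR⟩ := Nat.sInf_mem ⟨_, hmem⟩
      have hlow : 2 * d - 1 ≤ sInf S := by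
        by_contra hl
        push_neg at hl
        exact PRAux.LB2 hd α β hab hT G₀ hG₀f (by omega) hG₀PR
      omega
    · rw [if_neg h2]
      obtain ⟨x, y, z, hxΘ, hyΘ, hzΘ, hxy, hxz, hyz⟩ :
          ∃ x y z : ℂ, x ∈ Θ ∧ y ∈ Θ ∧ z ∈ Θ ∧ x ≠ y ∧ x ≠ z ∧ y ≠ z := by
        have key : ∃ t : Finset ℂ, ↑t ⊆ Θ ∧ t.card = 3 := by
          rcases Θ.finite_or_infinite with hf | hinf
          · have hpos : 0 < Θ.ncard := (Set.ncard_pos hf).2 hne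
            have h3 : 3 ≤ Θ.ncard := by omega
            rw [Set.ncard_eq_toFinset_card Θ hf] at h3
            obtain ⟨t, hts, htc⟩ := Finset.exists_subset_card_eq h3
            refine ⟨t, ?_, htc⟩
            intro a ha
            have := hts ha
            rwa [Set.Finite.mem_toFinset] at this
          · obtain ⟨t, hts, htc⟩ := hinf.exists_subset_card_eq 3
            exact ⟨t, hts, htc⟩
        obtain ⟨t, hts, htc⟩ := key
        obtain ⟨x, y, z, hxy, hxz, hyz, htd⟩ := Finset.card_eq_three.1 htc
        refine ⟨x, y, z, ?_, ?_, ?_, hxy, hxz, hyz⟩ <;>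
          · apply hts; rw [htd]; simp
      obtain ⟨G, hGf, hGc, hGPR⟩ := PRAux.UB3 hd1 hcnt hne
      have hmem : G.ncard ∈ S := ⟨G, hGf, rfl, hGPR⟩
      have hup : sInf S ≤ 2 * d := le_trans (Nat.sInf_le hmem) hGc
      obtain ⟨G₀, hG₀f, hG₀c, hG₀PR⟩ := Nat.sInf_mem ⟨_, hmem⟩
      have hlow : 2 * d ≤ sInf S := by
        by_contra hl
        push_neg at hl
        exact PRAux.LB3 hd x y z hxΘ hyΘ hzΘ hxy hxz hyz G₀ hG₀f (by omega) hG₀PR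
      omega
end
end

section
/- Let d ≥ 1 and suppose Θ ⊆ 𝕋 contains a non-trivial arc, i.e., there exist real numbers u < v such that {e^{it} : t ∈ [u, v]} ⊆ Θ. Then a finite nonempty set G = {g_1, …, g_m} ⊆ ℂ^d does Θ-PR in ℂ^d if and only if G does 𝕋-PR (phase retrieval) in ℂ^d. -/
open MeasureTheory Set

noncomputable section

theorem stmt10 (d : ℕ) (hd : 1 ≤ d)
    (Θ : Set ℂ) (hΘ : Θ ⊆ unitCircle)
    (u v : ℝ) (huv : u < v)
    (harc : {z : ℂ | ∃ t : ℝ, u ≤ t ∧ t ≤ v ∧ z = Complex.exp (Complex.I * (t : ℂ))} ⊆ Θ)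
    (m : ℕ) (hm : 1 ≤ m) (g : Fin m → EuclideanSpace ℂ (Fin d)) :
    DoesPR (Set.range g) Θ ↔ DoesPR (Set.range g) unitCircle := by
  have h1mem : (1 : ℂ) ∈ unitCircle := by simp [unitCircle]
  have humem : Complex.exp (Complex.I * (u : ℂ)) ∈ Θ := harc ⟨u, le_rfl, huv.le, rfl⟩
  constructor
  · -- Θ-PR → 𝕋-PR
    intro hPR f h hyp
    -- choose phases
    have key : ∀ i : Fin m, ∃ θ : ℂ, ‖θ‖ = 1 ∧
        (inner ℂ (g i) f : ℂ) = θ * (inner ℂ (g i) h : ℂ) := by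
      intro i
      obtain ⟨θ, hθ, he⟩ := hyp (g i) ⟨i, rfl⟩
      exact ⟨θ, hθ, he⟩
    choose θ hθabs hθeq using key
    -- choose β with β * θ i ≠ -1 for all i
    obtain ⟨β, hβabs, hβ⟩ : ∃ β : ℂ, ‖β‖ = 1 ∧ ∀ i, β * θ i ≠ -1 := by
      set Bad : Fin m → Set ℝ :=
        fun i => {s | s ∈ Icc (0:ℝ) 1 ∧ Complex.exp (Complex.I * (s : ℂ)) * θ i = -1} with hBad
      have hsub : ∀ i, (Bad i).Subsingleton := by
        intro i s hs s' hs'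
        obtain ⟨⟨hs0, hs1⟩, he⟩ := hs
        obtain ⟨⟨hs0', hs1'⟩, he'⟩ := hs'
        have hθne : θ i ≠ 0 := by
          intro h0
          rw [h0, mul_zero] at he
          exact (by norm_num : (0:ℂ) ≠ -1) he
        have hee : Complex.exp (Complex.I * (s : ℂ)) = Complex.exp (Complex.I * (s' : ℂ)) :=
          mul_right_cancel₀ hθne (he.trans he'.symm)
        rw [Complex.exp_eq_exp_iff_exists_int] at hee
        obtain ⟨n, hn⟩ := hee
        have hreal : (s : ℂ) = (s' : ℂ) + (n : ℂ) * (2 * Real.pi) := by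
          have h2 : Complex.I * (s : ℂ) = Complex.I * ((s' : ℂ) + (n : ℂ) * (2 * Real.pi)) := by
            linear_combination hn
          exact mul_left_cancel₀ Complex.I_ne_zero h2
        have hr : s = s' + (n : ℝ) * (2 * Real.pi) := by exact_mod_cast hreal
        have hn0 : n = 0 := by
          by_contra hne
          have h1 : (1:ℝ) ≤ |(n:ℝ)| := by exact_mod_cast Int.one_le_abs hne
          have hpi : (3:ℝ) < Real.pi := Real.pi_gt_three
          have habs : |s - s'| ≤ 1 := by
            rw [abs_le]; constructor <;> linarith
          have hss : s - s' = (n:ℝ) * (2 * Real.pi) := by linarith [hr]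
          have habs2 : |s - s'| = |(n:ℝ)| * (2 * Real.pi) := by
            rw [hss, abs_mul, abs_of_nonneg (by positivity : (0:ℝ) ≤ 2 * Real.pi)]
          nlinarith [abs_nonneg ((n:ℝ))]
        rw [hn0] at hr
        simpa using hr
      have hfin : (⋃ i, Bad i).Finite := Set.finite_iUnion (fun i => (hsub i).finite)
      have hinf : (Icc (0:ℝ) 1 \ ⋃ i, Bad i).Infinite :=
        (Set.Icc_infinite (by norm_num : (0:ℝ) < 1)).diff hfin
      obtain ⟨s, hsIcc, hsBad⟩ := hinf.nonempty
      refine ⟨Complex.exp (Complex.I * (s : ℂ)), ?_, ?_⟩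
      · rw [mul_comm]
        exact Complex.norm_exp_ofReal_mul_I s
      · intro i hcon
        exact hsBad (Set.mem_iUnion.2 ⟨i, hsIcc, hcon⟩)
    -- auxiliary quantities
    set θ' : Fin m → ℂ := fun i => β * θ i with hθ'def
    have hθ'abs : ∀ i, ‖θ' i‖ = 1 := fun i => by
      simp only [hθ'def]; rw [norm_mul, hβabs, hθabs, one_mul]
    have hθ'ne : ∀ i, (1 : ℂ) + θ' i ≠ 0 := by
      intro i hc
      exact hβ i (by simp only [hθ'def] at hc; linear_combination hc)
    set δ : ℝ := (v - u) / 2 with hδdef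
    have hδpos : 0 < δ := by rw [hδdef]; linarith
    set F : Fin m → ℝ → ℂ := fun i r => (θ' i + (r : ℂ)) / (1 + (r : ℂ) * θ' i) with hFdef
    have hFtend : ∀ i, Filter.Tendsto (fun r : ℝ => Complex.arg (F i r)) (nhds 1) (nhds 0) := by
      intro i
      have hnum : ContinuousAt (fun r : ℝ => θ' i + (r : ℂ)) 1 :=
        (continuous_const.add Complex.continuous_ofReal).continuousAt
      have hden : ContinuousAt (fun r : ℝ => (1 : ℂ) + (r : ℂ) * θ' i) 1 :=
        (continuous_const.add (Complex.continuous_ofReal.mul continuous_const)).continuousAt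
      have hdne : (1 : ℂ) + ((1 : ℝ) : ℂ) * θ' i ≠ 0 := by
        push_cast; rw [one_mul]; exact hθ'ne i
      have hFc : ContinuousAt (F i) 1 := by
        simp only [hFdef]
        exact hnum.div hden hdne
      have hF1 : F i 1 = 1 := by
        simp only [hFdef]; push_cast; rw [one_mul, add_comm (θ' i), div_self (hθ'ne i)]
      have hargc : ContinuousAt Complex.arg (F i 1) := by
        rw [hF1]; exact Complex.continuousAt_arg Complex.one_mem_slitPlane
      have hcomp : ContinuousAt (fun r : ℝ => Complex.arg (F i r)) 1 := hargc.comp hFc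
      have := hcomp.tendsto
      rwa [hF1, Complex.arg_one] at this
    have hev : ∀ᶠ r in nhdsWithin 1 (Set.Iio (1 : ℝ)),
        (∀ i, |Complex.arg (F i r)| < δ) ∧ r ∈ Set.Ioo (0 : ℝ) 1 := by
      refine Filter.Eventually.and ?_ ?_
      · refine Filter.eventually_all.2 (fun i => ?_)
        have habs : Filter.Tendsto (fun r : ℝ => |Complex.arg (F i r)|) (nhds 1) (nhds 0) := by
          simpa using (hFtend i).abs
        exact (habs.eventually_lt_const hδpos).filter_mono nhdsWithin_le_nhds
      · exact Filter.eventually_of_mem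
          (Ioo_mem_nhdsLT_of_mem (by norm_num : (1 : ℝ) ∈ Set.Ioc (0 : ℝ) 1)) (fun x hx => hx)
    obtain ⟨r, hargsmall, hr0, hr1⟩ := hev.exists
    have hdenne : ∀ i, (1 : ℂ) + (r : ℂ) * θ' i ≠ 0 := by
      intro i hc
      have hre : (r : ℂ) * θ' i = -1 := by linear_combination hc
      have := congrArg (‖·‖) hre
      rw [norm_mul, Complex.norm_real, Real.norm_eq_abs, hθ'abs, mul_one, abs_of_pos hr0] at this
      simp at this
      linarith
    have hφabs : ∀ i, ‖F i r‖ = 1 := by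
      intro i
      have hc : θ' i * (starRingEnd ℂ) (θ' i) = 1 := by
        rw [Complex.mul_conj, Complex.normSq_eq_norm_sq, hθ'abs]; norm_num
      have hconj : θ' i + (r : ℂ) = θ' i * (starRingEnd ℂ) (1 + (r : ℂ) * θ' i) := by
        simp only [map_add, map_mul, map_one, Complex.conj_ofReal]
        linear_combination (-(r : ℂ)) * hc
      have habsne : ‖1 + (r : ℂ) * θ' i‖ ≠ 0 := by
        simpa using hdenne i
      simp only [hFdef]
      rw [norm_div, hconj, norm_mul, Complex.norm_conj, hθ'abs, one_mul, div_self habsne]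
    set α : ℂ := Complex.exp (Complex.I * (((u + v) / 2 : ℝ) : ℂ)) with hαdef
    have hαabs : ‖α‖ = 1 := by
      rw [hαdef, mul_comm]; exact Complex.norm_exp_ofReal_mul_I _
    set f' : EuclideanSpace ℂ (Fin d) := α • ((β • f) + ((r : ℂ) • h)) with hf'def
    set h' : EuclideanSpace ℂ (Fin d) := h + (r : ℂ) • (β • f) with hh'def
    have hinnf' : ∀ i, (inner ℂ (g i) f' : ℂ)
        = α * (β * (inner ℂ (g i) f : ℂ) + (r : ℂ) * (inner ℂ (g i) h : ℂ)) := by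
      intro i
      simp only [hf'def, inner_add_right, inner_smul_right]
    have hinnh' : ∀ i, (inner ℂ (g i) h' : ℂ)
        = (inner ℂ (g i) h : ℂ) + (r : ℂ) * (β * (inner ℂ (g i) f : ℂ)) := by
      intro i
      simp only [hh'def, inner_add_right, inner_smul_right]
    have hypPR : ∀ g' ∈ Set.range g, ∃ ψ ∈ Θ, (inner ℂ g' f' : ℂ) = ψ * (inner ℂ g' h' : ℂ) := by
      rintro _ ⟨i, rfl⟩
      by_cases hc : (inner ℂ (g i) h : ℂ) = 0
      · have hb : (inner ℂ (g i) f : ℂ) = 0 := by rw [hθeq i, hc, mul_zero]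
        refine ⟨Complex.exp (Complex.I * (u : ℂ)), humem, ?_⟩
        rw [hinnf' i, hinnh' i, hb, hc]; ring
      · set t : ℝ := (u + v) / 2 + Complex.arg (F i r) with htdef
        have habs := abs_lt.1 (hargsmall i)
        have hδval : δ = (v - u) / 2 := hδdef
        refine ⟨Complex.exp (Complex.I * (t : ℂ)),
          harc ⟨t, by rw [htdef]; rw [hδval] at habs; constructor; · linarith [habs.1]
                      constructor; · linarith [habs.2]
                      rfl⟩, ?_⟩
        have hexp : Complex.exp (Complex.I * (t : ℂ)) = α * F i r := by
          have h1 : F i r = Complex.exp ((Complex.arg (F i r) : ℂ) * Complex.I) := by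
            conv_lhs => rw [← Complex.norm_mul_exp_arg_mul_I (F i r)]
            rw [hφabs i]; norm_num
          rw [hαdef, h1, ← Complex.exp_add, htdef]
          push_cast
          ring_nf
        have hkey : β * θ i + (r : ℂ) = F i r * (1 + (r : ℂ) * (β * θ i)) := by
          have : θ' i + (r : ℂ) = F i r * (1 + (r : ℂ) * θ' i) := by
            simp only [hFdef]
            exact (div_mul_cancel₀ _ (hdenne i)).symm
          simpa only [hθ'def] using this
        rw [hexp, hinnf' i, hinnh' i, hθeq i]
        linear_combination (α * (inner ℂ (g i) h : ℂ)) * hkey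
    obtain ⟨ϑ, hϑΘ, hfh⟩ := hPR f' h' hypPR
    have hϑabs : ‖ϑ‖ = 1 := hΘ hϑΘ
    have halg : ((α - ϑ * (r : ℂ)) * β) • f - (ϑ - α * (r : ℂ)) • h = f' - ϑ • h' := by
      rw [hf'def, hh'def]; module
    rw [hfh, sub_self] at halg
    have hsub : ((α - ϑ * (r : ℂ)) * β) • f = (ϑ - α * (r : ℂ)) • h := by
      have := sub_eq_zero.1 halg
      exact this
    have hαϑ : α - ϑ * (r : ℂ) ≠ 0 := by
      intro hc
      have he : α = ϑ * (r : ℂ) := by linear_combination hc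
      have := congrArg (‖·‖) he
      rw [hαabs, norm_mul, hϑabs, one_mul, Complex.norm_real, Real.norm_eq_abs, abs_of_pos hr0] at this
      linarith
    have hβne : β ≠ 0 := by
      intro hc; rw [hc] at hβabs; simp at hβabs
    have hcne : (α - ϑ * (r : ℂ)) * β ≠ 0 := mul_ne_zero hαϑ hβne
    have hf : f = (((α - ϑ * (r : ℂ)) * β)⁻¹ * (ϑ - α * (r : ℂ))) • h := by
      rw [mul_smul, ← hsub, inv_smul_smul₀ hcne]
    refine ⟨(((α - ϑ * (r : ℂ)) * β)⁻¹ * (ϑ - α * (r : ℂ))), ?_, hf⟩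
    have hconj2 : ϑ - α * (r : ℂ) = (α * ϑ) * (starRingEnd ℂ) (α - ϑ * (r : ℂ)) := by
      have hαc : α * (starRingEnd ℂ) α = 1 := by
        rw [Complex.mul_conj, Complex.normSq_eq_norm_sq, hαabs]; norm_num
      have hϑc : ϑ * (starRingEnd ℂ) ϑ = 1 := by
        rw [Complex.mul_conj, Complex.normSq_eq_norm_sq, hϑabs]; norm_num
      simp only [map_sub, map_mul, Complex.conj_ofReal]
      linear_combination (-ϑ) * hαc + (α * (r : ℂ)) * hϑc
    show ‖_‖ = 1
    have habsne : ‖α - ϑ * (r : ℂ)‖ ≠ 0 := norm_ne_zero_iff.mpr hαϑ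
    rw [norm_mul, norm_inv, norm_mul, hβabs, mul_one, hconj2, norm_mul, Complex.norm_conj,
      norm_mul, hαabs, hϑabs, one_mul, one_mul, inv_mul_cancel₀ habsne]
  · -- 𝕋-PR → Θ-PR
    intro hPR f h hyp
    have hyp' : ∀ g' ∈ Set.range g, ∃ θ ∈ unitCircle, (inner ℂ g' f : ℂ) = θ * (inner ℂ g' h : ℂ) :=
      fun g' hg' => by
        obtain ⟨θ, hθ, he⟩ := hyp g' hg'
        exact ⟨θ, hΘ hθ, he⟩
    obtain ⟨ϑ, hϑ, hfϑ⟩ := hPR f h hyp'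
    by_cases hh : ∀ g' ∈ Set.range g, (inner ℂ g' h : ℂ) = 0
    · -- all measurements of h vanish, hence h = 0 and f = 0
      have hh0 : h = 0 := by
        obtain ⟨ψ, _, hψ⟩ := hPR h 0 (fun g' hg' => ⟨1, h1mem, by simp [hh g' hg']⟩)
        simpa using hψ
      refine ⟨Complex.exp (Complex.I * (u : ℂ)), humem, ?_⟩
      rw [hfϑ, hh0, smul_zero, smul_zero]
    · push_neg at hh
      obtain ⟨g', hg', hgne⟩ := hh
      obtain ⟨ψ, hψΘ, hψ⟩ := hyp g' hg'
      have : (inner ℂ g' f : ℂ) = ϑ * (inner ℂ g' h : ℂ) := by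
        rw [hfϑ, inner_smul_right]
      have hψϑ : ψ = ϑ := by
        have := hψ.symm.trans this
        exact mul_right_cancel₀ hgne this
      exact ⟨ψ, hψΘ, hψϑ ▸ hfϑ⟩
end
end

section
/- Let H be a complex Hilbert space, let Θ ⊆ 𝕋 be nonempty, and let G ⊆ H be nonempty. (1) If G does Θ-PR in H, then G is complete in H. (2) If G is complete in H and Θ is a singleton, then G does Θ-PR in H. -/
open MeasureTheory Set

noncomputable section

theorem stmt11 {H : Type*} [NormedAddCommGroup H] [InnerProductSpace ℂ H] [CompleteSpace H]
    (G : Set H) (hG : G.Nonempty) (Θ : Set ℂ) (hΘ : Θ ⊆ unitCircle) (hne : Θ.Nonempty) :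
    (DoesPR G Θ → IsCompleteSystem G) ∧
    (IsCompleteSystem G → (∃ θ₀ : ℂ, Θ = {θ₀}) → DoesPR G Θ) := by
  constructor
  · intro hPR
    rw [IsCompleteSystem, Submodule.topologicalClosure_eq_top_iff, Submodule.eq_bot_iff]
    intro u hu
    obtain ⟨θ₀, hθ₀⟩ := hne
    obtain ⟨θ, hθ, hu0⟩ := hPR u 0 (fun g hg =>
      ⟨θ₀, hθ₀, by
        rw [inner_zero_right, mul_zero]
        exact (Submodule.inner_right_of_mem_orthogonal (Submodule.subset_span hg) hu)⟩)
    simpa using hu0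
  · rintro hC ⟨θ₀, rfl⟩ f h hf
    refine ⟨θ₀, rfl, ?_⟩
    have key : f - θ₀ • h ∈ (Submodule.span ℂ G)ᗮ := by
      rw [Submodule.mem_orthogonal]
      intro v hv
      induction hv using Submodule.span_induction with
      | mem g hg =>
        obtain ⟨θ, hθ, e⟩ := hf g hg
        rw [Set.mem_singleton_iff] at hθ
        rw [inner_sub_right, inner_smul_right, ← hθ, e, sub_self]
      | zero => simp
      | add x y _ _ hx hy => rw [inner_add_left, hx, hy, add_zero]
      | smul c x _ hx => rw [inner_smul_left, hx, mul_zero]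
    rw [IsCompleteSystem, Submodule.topologicalClosure_eq_top_iff, Submodule.eq_bot_iff] at hC
    have := hC _ key
    rwa [sub_eq_zero] at this
end
end

section
/- Let H be a complex Hilbert space, let G ⊆ H be nonempty, and let Θ, Θ' ⊆ 𝕋 be nonempty sets with Θ' ⊆ Θ. If G does Θ-PR in H, then G does Θ'-PR in H. -/
open MeasureTheory Set

noncomputable section

theorem stmt12 {H : Type*} [NormedAddCommGroup H] [InnerProductSpace ℂ H] [CompleteSpace H]
    (G : Set H) (hG : G.Nonempty)
    (Θ Θ' : Set ℂ) (hΘ : Θ ⊆ unitCircle) (hΘ' : Θ'.Nonempty) (hsub : Θ' ⊆ Θ)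
    (h : DoesPR G Θ) : DoesPR G Θ' := by
  intro f h0 hyp
  obtain ⟨θ₀, hθ₀⟩ := hΘ'
  have hyp' : ∀ g ∈ G, ∃ θ ∈ Θ, (inner ℂ g f : ℂ) = θ * (inner ℂ g h0 : ℂ) :=
    fun g hg => let ⟨θ, hθmem, he⟩ := hyp g hg; ⟨θ, hsub hθmem, he⟩
  obtain ⟨θ, hθmem, hf⟩ := h f h0 hyp'
  by_cases hc : ∃ g ∈ G, (inner ℂ g h0 : ℂ) ≠ 0
  · obtain ⟨g, hg, hne⟩ := hc
    obtain ⟨θg, hθg, he⟩ := hyp g hg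
    refine ⟨θg, hθg, ?_⟩
    have h2 : (inner ℂ g f : ℂ) = θ * inner ℂ g h0 := by rw [hf, inner_smul_right]
    have h3 : θ = θg := mul_right_cancel₀ hne (by rw [← h2, he])
    rw [← h3]; exact hf
  · push_neg at hc
    have hfz : ∀ g ∈ G, (inner ℂ g f : ℂ) = 0 := by
      intro g hg
      obtain ⟨θg, _, he⟩ := hyp g hg
      rw [he, hc g hg, mul_zero]
    have hf0 : f = 0 := by
      obtain ⟨θ1, _, e⟩ := h f 0 (fun g hg => ⟨θ, hθmem, by rw [hfz g hg, inner_zero_right, mul_zero]⟩)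
      rw [e, smul_zero]
    have hh0 : h0 = 0 := by
      obtain ⟨θ1, _, e⟩ := h h0 0 (fun g hg => ⟨θ, hθmem, by rw [hc g hg, inner_zero_right, mul_zero]⟩)
      rw [e, smul_zero]
    exact ⟨θ₀, hθ₀, by rw [hf0, hh0, smul_zero]⟩
end
end

section
/- Let H be a complex Hilbert space of dimension at least 2, let Θ ⊆ 𝕋 be nonempty, and let G ⊆ H be nonempty. Then G fails Θ-PR if and only if there exist linearly independent vectors f, h ∈ H such that for every g ∈ G there exists θ_g ∈ Θ with ⟨f,g⟩ = θ_g⟨h,g⟩, and yet f ≠ θh for every θ ∈ Θ. -/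
open MeasureTheory Set

noncomputable section

theorem stmt13 {H : Type*} [NormedAddCommGroup H] [InnerProductSpace ℂ H] [CompleteSpace H]
    (hdim : 2 ≤ Module.rank ℂ H)
    (G : Set H) (hG : G.Nonempty) (Θ : Set ℂ) (hΘ : Θ ⊆ unitCircle) (hne : Θ.Nonempty) :
    ¬ DoesPR G Θ ↔
      ∃ f h : H, LinearIndependent ℂ ![f, h] ∧
        (∀ g ∈ G, ∃ θ ∈ Θ, (inner ℂ g f : ℂ) = θ * (inner ℂ g h : ℂ)) ∧
        (∀ θ ∈ Θ, f ≠ θ • h) := by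
  constructor
  · intro hfail
    unfold DoesPR at hfail
    push_neg at hfail
    obtain ⟨f, h, hcond, hno⟩ := hfail
    by_cases hli : LinearIndependent ℂ ![f, h]
    · exact ⟨f, h, hli, hcond, hno⟩
    · have key : ∃ v : H, v ≠ 0 ∧ ∀ g ∈ G, (inner ℂ g v : ℂ) = 0 := by
        rw [LinearIndependent.pair_iff] at hli
        push_neg at hli
        obtain ⟨s, t, hst, hst0⟩ := hli
        by_cases hs : s = 0
        · subst hs
          have ht : t ≠ 0 := by tauto
          have hh : h = 0 := by
            have := hst
            rw [zero_smul, zero_add, smul_eq_zero] at this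
            tauto
        -- h = 0 : witness is f
          refine ⟨f, ?_, ?_⟩
          · intro hf0
            obtain ⟨θ, hθ⟩ := hne
            exact hno θ hθ (by simp [hf0, hh])
          · intro g hg
            obtain ⟨θ, _, hθ⟩ := hcond g hg
            simpa [hh] using hθ
        · -- f = c • h
          have hf : f = (-(t / s)) • h := by
            have : s • f = (-t) • h := by
              have := hst
              rw [add_eq_zero_iff_eq_neg] at this
              rw [this, ← neg_smul]
            have := congrArg (fun x => s⁻¹ • x) this
            simpa [smul_smul, hs, inv_mul_cancel₀ hs, neg_div, div_eq_inv_mul,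
              mul_comm] using this
          refine ⟨h, ?_, ?_⟩
          · intro hh0
            obtain ⟨θ, hθ⟩ := hne
            exact hno θ hθ (by simp [hf, hh0])
          · intro g hg
            by_contra hgh
            obtain ⟨θ, hθΘ, hθ⟩ := hcond g hg
            rw [hf, inner_smul_right] at hθ
            have hc : (-(t / s)) = θ := mul_right_cancel₀ hgh hθ
            exact hno θ hθΘ (by rw [hf, hc])
      obtain ⟨v, hv0, hvG⟩ := key
      have he : ∃ e : H, e ∉ Submodule.span ℂ {v} := by
        by_contra hall
        push_neg at hall
        have htop : (Submodule.span ℂ {v} : Submodule ℂ H) = ⊤ :=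
          eq_top_iff.2 fun x _ => hall x
        have h1 : Module.rank ℂ H ≤ 1 := by
          calc Module.rank ℂ H = Module.rank ℂ (⊤ : Submodule ℂ H) := (rank_top ℂ H).symm
            _ = Module.rank ℂ (Submodule.span ℂ ({v} : Set H)) := by rw [htop]
            _ ≤ 1 := by simpa using rank_span_le ({v} : Set H)
        have : (2 : Cardinal) ≤ 1 := hdim.trans h1
        norm_num at this
      obtain ⟨e, he⟩ := he
      obtain ⟨θ₀, hθ₀⟩ := hne
      refine ⟨θ₀ • e + v, e, ?_, ?_, ?_⟩
      · rw [LinearIndependent.pair_iff]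
        intro s t hst
        have hkey : s • v + (s * θ₀ + t) • e = 0 := by
          rw [← hst]; module
        by_cases hc : s * θ₀ + t = 0
        · rw [hc, zero_smul, add_zero, smul_eq_zero] at hkey
          have hs : s = 0 := by tauto
          constructor
          · exact hs
          · have := hc
            rw [hs, zero_mul, zero_add] at this
            exact this
        · exfalso
          apply he
          rw [Submodule.mem_span_singleton]
          refine ⟨-((s * θ₀ + t)⁻¹ * s), ?_⟩
          have : (s * θ₀ + t) • e = -(s • v) := by
            rw [eq_neg_iff_add_eq_zero, add_comm]; exact hkey
          have := congrArg (fun x => (s * θ₀ + t)⁻¹ • x) this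
          simp only [smul_smul, inv_mul_cancel₀ hc, one_smul, smul_neg] at this
          rw [neg_smul]
          exact this.symm
      · intro g hg
        exact ⟨θ₀, hθ₀, by rw [inner_add_right, inner_smul_right, hvG g hg, add_zero]⟩
      · intro θ hθ hEq
        have hv : v = (θ - θ₀) • e := by
          have := hEq
          rw [add_comm, ← eq_sub_iff_add_eq] at this
          rw [this, sub_smul]
        by_cases hd : θ - θ₀ = 0
        · exact hv0 (by rw [hv, hd, zero_smul])
        · apply he
          rw [Submodule.mem_span_singleton]
          exact ⟨(θ - θ₀)⁻¹, by rw [hv, smul_smul, inv_mul_cancel₀ hd, one_smul]⟩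
  · rintro ⟨f, h, _, hcond, hno⟩ hPR
    obtain ⟨θ, hθΘ, hθ⟩ := hPR f h hcond
    exact hno θ hθΘ hθ
end
end

section
/- Let H be a complex Hilbert space and let {g_j}_{j∈ℕ} ⊆ H be an overcomplete sequence, i.e., for every infinite subset I ⊆ ℕ the set {g_j : j ∈ I} is complete in H. Then the set G = {g_j : j ∈ ℕ} does Θ-PR in H for every finite nonempty Θ ⊆ 𝕋. -/
open MeasureTheory Set

noncomputable section

theorem stmt14 {H : Type*} [NormedAddCommGroup H] [InnerProductSpace ℂ H] [CompleteSpace H]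
    (g : ℕ → H)
    (hover : ∀ I : Set ℕ, I.Infinite → IsCompleteSystem (g '' I))
    (Θ : Set ℂ) (hΘ : Θ ⊆ unitCircle) (hfin : Θ.Finite) (hne : Θ.Nonempty) :
    DoesPR (Set.range g) Θ := by
  intro f h hcond
  choose θ hθmem hθeq using fun n => hcond (g n) ⟨n, rfl⟩
  have : Finite ↥Θ := hfin.to_subtype
  obtain ⟨⟨θ0, hθ0⟩, hIfib⟩ :=
    Finite.exists_infinite_fiber (fun n => (⟨θ n, hθmem n⟩ : Θ))
  have hIinf : {n | θ n = θ0}.Infinite := by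
    have := Set.infinite_coe_iff.mp hIfib
    refine this.mono ?_
    intro n hn
    simpa [Subtype.ext_iff] using hn
  have hcomp := hover _ hIinf
  refine ⟨θ0, hθ0, ?_⟩
  have hv : f - θ0 • h ∈ (Submodule.span ℂ (g '' {n | θ n = θ0}))ᗮ := by
    rw [Submodule.mem_orthogonal]
    intro u hu
    induction hu using Submodule.span_induction with
    | mem u hu =>
      obtain ⟨n, hn, rfl⟩ := hu
      have : θ n = θ0 := hn
      rw [inner_sub_right, inner_smul_right, hθeq n, this, sub_self]
    | zero => simp
    | add u v _ _ hu hv => rw [inner_add_left, hu, hv, add_zero]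
    | smul c u _ hu => rw [inner_smul_left, hu, mul_zero]
  rw [IsCompleteSystem, Submodule.topologicalClosure_eq_top_iff] at hcomp
  rw [hcomp, Submodule.mem_bot, sub_eq_zero] at hv
  exact hv
end
end

section
/- Let H be a complex Hilbert space and let G ⊆ H be nonempty. Let Θ = {θ_1, θ_2, θ_3, θ_4} ⊆ 𝕋 and Θ' = {θ_1', θ_2', θ_3', θ_4'} ⊆ 𝕋 each consist of four pairwise distinct elements, and suppose CR(θ_1, θ_2; θ_3, θ_4) = CR(θ_1', θ_2'; θ_3', θ_4'). Then G does Θ-PR in H if and only if G does Θ'-PR in H. -/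
open MeasureTheory Set

noncomputable section

/-- The cross ratio of four complex numbers. -/
def crossRatio (z₁ z₂ z₃ z₄ : ℂ) : ℂ :=
  ((z₁ - z₃) * (z₂ - z₄)) / ((z₁ - z₄) * (z₂ - z₃))

/-- Phase retrieval transfers through a Möbius transformation given by an invertible
matrix `(a b; c d)` mapping `Θ` onto `Θ'`. -/
lemma pr_transfer {H : Type*} [NormedAddCommGroup H] [InnerProductSpace ℂ H]
    (G : Set H) (a b c d : ℂ) (hdet : a * d - b * c ≠ 0) (Θ Θ' : Set ℂ)
    (hmap : ∀ θ ∈ Θ, ∃ θ' ∈ Θ', a * θ + b = θ' * (c * θ + d))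
    (hsurj : ∀ θ' ∈ Θ', ∃ θ ∈ Θ, a * θ + b = θ' * (c * θ + d))
    (hPR : DoesPR G Θ') : DoesPR G Θ := by
  intro f h hfh
  have key : ∀ g ∈ G, ∃ θ' ∈ Θ',
      (inner ℂ g (a • f + b • h) : ℂ) = θ' * (inner ℂ g (c • f + d • h) : ℂ) := by
    intro g hg
    obtain ⟨θ, hθΘ, hθ⟩ := hfh g hg
    obtain ⟨θ', hθ'Θ', hid⟩ := hmap θ hθΘ
    refine ⟨θ', hθ'Θ', ?_⟩
    simp only [inner_add_right, inner_smul_right]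
    rw [hθ]
    linear_combination (inner ℂ g h : ℂ) * hid
  obtain ⟨θ', hθ'Θ', heq⟩ := hPR _ _ key
  obtain ⟨θ, hθΘ, hid⟩ := hsurj θ' hθ'Θ'
  refine ⟨θ, hθΘ, ?_⟩
  have hne : a - θ' * c ≠ 0 := by
    intro h0
    have hb : θ' * d - b = 0 := by linear_combination θ * h0 - hid
    exact hdet (by linear_combination d * h0 + c * hb)
  have h2 : (a - θ' * c) • f = (θ' * d - b) • h := by
    linear_combination (norm := module) heq
  have hθeq : θ' * d - b = θ * (a - θ' * c) := by linear_combination -hid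
  rw [hθeq, mul_comm θ, mul_smul] at h2
  exact smul_right_injective H hne h2

theorem stmt16 {H : Type*} [NormedAddCommGroup H] [InnerProductSpace ℂ H] [CompleteSpace H]
    (G : Set H) (hG : G.Nonempty)
    (θ₁ θ₂ θ₃ θ₄ θ₁' θ₂' θ₃' θ₄' : ℂ)
    (hθ : ∀ z ∈ ({θ₁, θ₂, θ₃, θ₄} : Set ℂ), z ∈ unitCircle)
    (hθ' : ∀ z ∈ ({θ₁', θ₂', θ₃', θ₄'} : Set ℂ), z ∈ unitCircle)
    (hdist : θ₁ ≠ θ₂ ∧ θ₁ ≠ θ₃ ∧ θ₁ ≠ θ₄ ∧ θ₂ ≠ θ₃ ∧ θ₂ ≠ θ₄ ∧ θ₃ ≠ θ₄)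
    (hdist' : θ₁' ≠ θ₂' ∧ θ₁' ≠ θ₃' ∧ θ₁' ≠ θ₄' ∧ θ₂' ≠ θ₃' ∧ θ₂' ≠ θ₄' ∧ θ₃' ≠ θ₄')
    (hCR : crossRatio θ₁ θ₂ θ₃ θ₄ = crossRatio θ₁' θ₂' θ₃' θ₄') :
    DoesPR G ({θ₁, θ₂, θ₃, θ₄} : Set ℂ) ↔ DoesPR G ({θ₁', θ₂', θ₃', θ₄'} : Set ℂ) := by
  obtain ⟨h12, h13, h14, h23, h24, h34⟩ := hdist
  obtain ⟨h12', h13', h14', h23', h24', h34'⟩ := hdist'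
  -- matrix of the Möbius map sending z to cross-ratio coordinates w.r.t. (θ₂,θ₃,θ₄)
  set p : ℂ := θ₂ - θ₄ with hp
  set q : ℂ := -θ₃ * (θ₂ - θ₄) with hq
  set r : ℂ := θ₂ - θ₃ with hr
  set s : ℂ := -θ₄ * (θ₂ - θ₃) with hs
  set p' : ℂ := θ₂' - θ₄' with hp'
  set q' : ℂ := -θ₃' * (θ₂' - θ₄') with hq'
  set r' : ℂ := θ₂' - θ₃' with hr'
  set s' : ℂ := -θ₄' * (θ₂' - θ₃') with hs'
  set a : ℂ := s' * p - q' * r with ha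
  set b : ℂ := s' * q - q' * s with hb
  set c : ℂ := -r' * p + p' * r with hc
  set d : ℂ := -r' * q + p' * s with hd
  have hdet : a * d - b * c ≠ 0 := by
    have : a * d - b * c = ((θ₂ - θ₄) * (θ₂ - θ₃) * (θ₃ - θ₄)) *
        ((θ₂' - θ₄') * (θ₂' - θ₃') * (θ₃' - θ₄')) := by
      rw [ha, hb, hc, hd, hp, hq, hr, hs, hp', hq', hr', hs']; ring
    rw [this]
    exact mul_ne_zero
      (mul_ne_zero (mul_ne_zero (sub_ne_zero.2 h24) (sub_ne_zero.2 h23)) (sub_ne_zero.2 h34))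
      (mul_ne_zero (mul_ne_zero (sub_ne_zero.2 h24') (sub_ne_zero.2 h23')) (sub_ne_zero.2 h34'))
  -- cleared cross-ratio equality
  have hcr : (θ₁ - θ₃) * (θ₂ - θ₄) * ((θ₁' - θ₄') * (θ₂' - θ₃')) =
      (θ₁' - θ₃') * (θ₂' - θ₄') * ((θ₁ - θ₄) * (θ₂ - θ₃)) := by
    have hden : (θ₁ - θ₄) * (θ₂ - θ₃) ≠ 0 :=
      mul_ne_zero (sub_ne_zero.2 h14) (sub_ne_zero.2 h23)
    have hden' : (θ₁' - θ₄') * (θ₂' - θ₃') ≠ 0 :=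
      mul_ne_zero (sub_ne_zero.2 h14') (sub_ne_zero.2 h23')
    have := hCR
    rw [crossRatio, crossRatio, div_eq_div_iff hden hden'] at this
    exact this
  have hid1 : a * θ₁ + b = θ₁' * (c * θ₁ + d) := by
    rw [ha, hb, hc, hd, hp, hq, hr, hs, hp', hq', hr', hs']
    linear_combination hcr
  have hid2 : a * θ₂ + b = θ₂' * (c * θ₂ + d) := by
    rw [ha, hb, hc, hd, hp, hq, hr, hs, hp', hq', hr', hs']; ring
  have hid3 : a * θ₃ + b = θ₃' * (c * θ₃ + d) := by
    rw [ha, hb, hc, hd, hp, hq, hr, hs, hp', hq', hr', hs']; ring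
  have hid4 : a * θ₄ + b = θ₄' * (c * θ₄ + d) := by
    rw [ha, hb, hc, hd, hp, hq, hr, hs, hp', hq', hr', hs']; ring
  have hmap : ∀ θ ∈ ({θ₁, θ₂, θ₃, θ₄} : Set ℂ),
      ∃ θ' ∈ ({θ₁', θ₂', θ₃', θ₄'} : Set ℂ), a * θ + b = θ' * (c * θ + d) := by
    intro θ hθmem
    simp only [Set.mem_insert_iff, Set.mem_singleton_iff] at hθmem
    rcases hθmem with rfl | rfl | rfl | rfl
    · exact ⟨θ₁', by simp, hid1⟩
    · exact ⟨θ₂', by simp, hid2⟩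
    · exact ⟨θ₃', by simp, hid3⟩
    · exact ⟨θ₄', by simp, hid4⟩
  have hsurj : ∀ θ' ∈ ({θ₁', θ₂', θ₃', θ₄'} : Set ℂ),
      ∃ θ ∈ ({θ₁, θ₂, θ₃, θ₄} : Set ℂ), a * θ + b = θ' * (c * θ + d) := by
    intro θ hθmem
    simp only [Set.mem_insert_iff, Set.mem_singleton_iff] at hθmem
    rcases hθmem with rfl | rfl | rfl | rfl
    · exact ⟨θ₁, by simp, hid1⟩
    · exact ⟨θ₂, by simp, hid2⟩
    · exact ⟨θ₃, by simp, hid3⟩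
    · exact ⟨θ₄, by simp, hid4⟩
  -- the inverse matrix data
  have hdet' : d * a - (-b) * (-c) ≠ 0 := by
    intro h0; exact hdet (by linear_combination h0)
  have hmap' : ∀ θ' ∈ ({θ₁', θ₂', θ₃', θ₄'} : Set ℂ),
      ∃ θ ∈ ({θ₁, θ₂, θ₃, θ₄} : Set ℂ), d * θ' + (-b) = θ * ((-c) * θ' + a) := by
    intro θ' hθmem
    obtain ⟨θ, hθΘ, hid⟩ := hsurj θ' hθmem
    exact ⟨θ, hθΘ, by linear_combination -hid⟩
  have hsurj' : ∀ θ ∈ ({θ₁, θ₂, θ₃, θ₄} : Set ℂ),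
      ∃ θ' ∈ ({θ₁', θ₂', θ₃', θ₄'} : Set ℂ), d * θ' + (-b) = θ * ((-c) * θ' + a) := by
    intro θ hθmem
    obtain ⟨θ', hθ'Θ', hid⟩ := hmap θ hθmem
    exact ⟨θ', hθ'Θ', by linear_combination -hid⟩
  constructor
  · exact fun hPR => pr_transfer G d (-b) (-c) a hdet' _ _ hmap' hsurj' hPR
  · exact fun hPR => pr_transfer G a b c d hdet _ _ hmap hsurj hPR
end
end
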